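/- arXiv:1903.08555 — 3 statements merged into one kernel-verified Lean document; each statement's English description precedes it below -/
import Mathlib

section
/- For the nonlinear compartmental ODE system dy_0/dt = -(λ̄_0(y)+μ̄_0(y)) y_0, dy_1/dt = λ̄_0(y) y_0 - (λ_1(y)+μ_1(y)) y_1, dy_i/dt = λ_{i-1}(y) y_{i-1} - (λ_i(y)+μ_i(y)) y_i for i=2,…,d, any nonnegative initial data y^{in} ∈ ℝ_+^{d+1} gives rise to a unique solution defined for all t ≥ 0; this solution has all components nonnegative for all times, the total population t ↦ Σ_{i=0}^d y_i(t) is nonincreasing (its derivative equals -μ̄_0(y(t)) y_0(t) - Σ_{i=1}^d μ_i(y(t)) y_i(t) ≤ 0), and consequently every component y_i is globally bounded. -/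
set_option autoImplicit false

open scoped BigOperators

/-- Generic maturation rate `λᵢ(y) = fᵢ / (1 + Kᵢ ∑_{j=1}^d wⱼ yⱼ)`. -/
noncomputable def lamGen (d : ℕ) (fi Ki : ℝ) (w : ℕ → ℝ) (y : ℕ → ℝ) : ℝ :=
  fi / (1 + Ki * ∑ j ∈ Finset.Icc 1 d, w j * y j)

/-- Generic death rate `μᵢ(y) = gᵢ (1 + Kᵢ ∑_{j=1}^d wⱼ yⱼ)`. -/
noncomputable def muGen (d : ℕ) (gi Ki : ℝ) (w : ℕ → ℝ) (y : ℕ → ℝ) : ℝ :=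
  gi * (1 + Ki * ∑ j ∈ Finset.Icc 1 d, w j * y j)

/-- Right hand side of the nonlinear compartmental ODE system. -/
noncomputable def rhsODE (d : ℕ) (f0 g0 K10 K20 : ℝ) (f g K1 K2 : ℕ → ℝ)
    (a b w1 w2 : ℕ → ℝ) (y : ℕ → ℝ) : ℕ → ℝ := fun i =>
  if i = 0 then
    -(lamGen d f0 K10 a y + muGen d g0 K20 b y) * y 0
  else if i = 1 then
    lamGen d f0 K10 a y * y 0
      - (lamGen d (f 1) (K1 1) w1 y + muGen d (g 1) (K2 1) w2 y) * y 1
  else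
    lamGen d (f (i - 1)) (K1 (i - 1)) w1 y * y (i - 1)
      - (lamGen d (f i) (K1 i) w1 y + muGen d (g i) (K2 i) w2 y) * y i

namespace Stmt0

open Set Filter Metric

structure Params where
  d : ℕ
  f0 : ℝ
  g0 : ℝ
  K10 : ℝ
  K20 : ℝ
  f : ℕ → ℝ
  g : ℕ → ℝ
  K1 : ℕ → ℝ
  K2 : ℕ → ℝ
  a : ℕ → ℝ
  b : ℕ → ℝ
  w1 : ℕ → ℝ
  w2 : ℕ → ℝ

structure Params.Good (p : Params) : Prop where
  hd : 1 ≤ p.d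
  hf0 : 0 ≤ p.f0
  hg0 : 0 ≤ p.g0
  hK10 : 0 ≤ p.K10
  hK20 : 0 ≤ p.K20
  hf : ∀ i, 1 ≤ i → i ≤ p.d → 0 ≤ p.f i
  hfd : p.f p.d = 0
  hg : ∀ i, 1 ≤ i → i ≤ p.d → 0 ≤ p.g i
  hK1 : ∀ i, 1 ≤ i → i ≤ p.d → 0 ≤ p.K1 i
  hK2 : ∀ i, 1 ≤ i → i ≤ p.d → 0 ≤ p.K2 i
  ha : ∀ j, 1 ≤ j → j ≤ p.d → p.a j ∈ Set.Icc (0 : ℝ) 1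
  hb : ∀ j, 1 ≤ j → j ≤ p.d → p.b j ∈ Set.Icc (0 : ℝ) 1
  hw1 : ∀ j, 1 ≤ j → j ≤ p.d → p.w1 j ∈ Set.Icc (0 : ℝ) 1
  hw2 : ∀ j, 1 ≤ j → j ≤ p.d → p.w2 j ∈ Set.Icc (0 : ℝ) 1

variable (p : Params)

/-- the right hand side as a function of `p` -/
noncomputable def Params.RHS (x : ℕ → ℝ) : ℕ → ℝ :=
  rhsODE p.d p.f0 p.g0 p.K10 p.K20 p.f p.g p.K1 p.K2 p.a p.b p.w1 p.w2 x

/-- embedding of `ℝ^{d+1}` into `ℕ → ℝ` -/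
def Params.emb (x : Fin (p.d + 1) → ℝ) : ℕ → ℝ :=
  fun j => if h : j < p.d + 1 then x ⟨j, h⟩ else 0

lemma Params.emb_coe (x : Fin (p.d + 1) → ℝ) {j : ℕ} (h : j ≤ p.d) :
    p.emb x j = x ⟨j, by omega⟩ := by
  simp [Params.emb, Nat.lt_succ_of_le h]

lemma Params.emb_add (x y : Fin (p.d + 1) → ℝ) (j : ℕ) :
    p.emb (x + y) j = p.emb x j + p.emb y j := by
  unfold Params.emb; split <;> simp

lemma Params.emb_smul (c : ℝ) (x : Fin (p.d + 1) → ℝ) (j : ℕ) :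
    p.emb (c • x) j = c * p.emb x j := by
  unfold Params.emb; split <;> simp

lemma Params.emb_nonneg {x : Fin (p.d + 1) → ℝ} (hx : ∀ i, 0 ≤ x i) (j : ℕ) :
    0 ≤ p.emb x j := by
  unfold Params.emb; split <;> simp [hx]

/-- the denominators are at least one at nonnegative points -/
lemma den_ge_one {d : ℕ} {K : ℝ} (hK : 0 ≤ K) {w x : ℕ → ℝ}
    (hw : ∀ j, 1 ≤ j → j ≤ d → 0 ≤ w j) (hx : ∀ j, j ≤ d → 0 ≤ x j) :
    (1 : ℝ) ≤ 1 + K * ∑ j ∈ Finset.Icc 1 d, w j * x j := by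
  have hs : 0 ≤ ∑ j ∈ Finset.Icc 1 d, w j * x j := by
    refine Finset.sum_nonneg fun j hj => ?_
    rw [Finset.mem_Icc] at hj
    exact mul_nonneg (hw j hj.1 hj.2) (hx j hj.2)
  nlinarith

lemma lamGen_nonneg {d : ℕ} {fi Ki : ℝ} (hfi : 0 ≤ fi) (hKi : 0 ≤ Ki) {w x : ℕ → ℝ}
    (hw : ∀ j, 1 ≤ j → j ≤ d → 0 ≤ w j) (hx : ∀ j, j ≤ d → 0 ≤ x j) :
    0 ≤ lamGen d fi Ki w x := by
  have := den_ge_one hKi hw hx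
  exact div_nonneg hfi (by linarith)

lemma muGen_nonneg {d : ℕ} {gi Ki : ℝ} (hgi : 0 ≤ gi) (hKi : 0 ≤ Ki) {w x : ℕ → ℝ}
    (hw : ∀ j, 1 ≤ j → j ≤ d → 0 ≤ w j) (hx : ∀ j, j ≤ d → 0 ≤ x j) :
    0 ≤ muGen d gi Ki w x := by
  have := den_ge_one hKi hw hx
  exact mul_nonneg hgi (by linarith)

/-- telescoping sum of the right hand side -/
lemma sum_RHS (hp : p.Good) (x : ℕ → ℝ) :
    ∑ i ∈ Finset.range (p.d + 1), p.RHS x i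
      = -(muGen p.d p.g0 p.K20 p.b x * x 0)
        - ∑ i ∈ Finset.Icc 1 p.d, muGen p.d (p.g i) (p.K2 i) p.w2 x * x i := by
  classical
  set L : ℕ → ℝ := fun i =>
    if i = 0 then lamGen p.d p.f0 p.K10 p.a x * x 0
    else lamGen p.d (p.f i) (p.K1 i) p.w1 x * x i with hL
  set Mu : ℕ → ℝ := fun i =>
    if i = 0 then muGen p.d p.g0 p.K20 p.b x * x 0
    else muGen p.d (p.g i) (p.K2 i) p.w2 x * x i with hMu
  have key : ∀ i, p.RHS x i = (if i = 0 then 0 else L (i - 1)) - L i - Mu i := by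
    intro i
    match i with
    | 0 => simp [Params.RHS, rhsODE, hL, hMu]; ring
    | 1 => simp [Params.RHS, rhsODE, hL, hMu]; ring
    | (n+2) =>
      have hne : n + 2 ≠ 1 := by omega
      simp [Params.RHS, rhsODE, hL, hMu, hne]; ring
  have hsum : ∑ i ∈ Finset.range (p.d + 1), p.RHS x i
      = (∑ i ∈ Finset.range (p.d + 1), (if i = 0 then 0 else L (i - 1)))
        - (∑ i ∈ Finset.range (p.d + 1), L i)
        - (∑ i ∈ Finset.range (p.d + 1), Mu i) := by
    rw [← Finset.sum_sub_distrib, ← Finset.sum_sub_distrib]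
    exact Finset.sum_congr rfl fun i _ => key i
  have h1 : ∑ i ∈ Finset.range (p.d + 1), (if i = 0 then 0 else L (i - 1))
      = ∑ i ∈ Finset.range p.d, L i := by
    rw [Finset.sum_range_succ']
    simp
  have h2 : ∑ i ∈ Finset.range (p.d + 1), L i = ∑ i ∈ Finset.range p.d, L i + L p.d :=
    Finset.sum_range_succ L p.d
  have hLd : L p.d = 0 := by
    have hd0 : p.d ≠ 0 := by have := hp.hd; omega
    simp [hL, hd0, lamGen, hp.hfd]
  have hIcc : ∀ (F : ℕ → ℝ), ∑ i ∈ Finset.range (p.d + 1), F i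
      = F 0 + ∑ i ∈ Finset.Icc 1 p.d, F i := by
    intro F
    have e1 : Finset.Icc 1 p.d = Finset.Ico 1 (p.d + 1) := by rw [Finset.Ico_add_one_right_eq_Icc]
    rw [Finset.sum_range_succ', e1, Finset.sum_Ico_eq_sum_range]
    simp only [Nat.add_sub_cancel]
    rw [add_comm]
    congr 1
    exact Finset.sum_congr rfl fun i _ => by rw [Nat.add_comm 1 i]
  have h3 : ∑ i ∈ Finset.range (p.d + 1), Mu i
      = Mu 0 + ∑ i ∈ Finset.Icc 1 p.d, muGen p.d (p.g i) (p.K2 i) p.w2 x * x i := by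
    rw [hIcc Mu]
    congr 1
    refine Finset.sum_congr rfl fun i hi => ?_
    rw [Finset.mem_Icc] at hi
    have : i ≠ 0 := by omega
    simp [hMu, this]
  rw [hsum, h1, h2, hLd, h3]
  simp [hMu]
  ring

/-- the right hand side only depends on coordinates `≤ d` -/
lemma RHS_congr {x x' : ℕ → ℝ} (h : ∀ j, j ≤ p.d → x j = x' j) {i : ℕ} (hi : i ≤ p.d) :
    p.RHS x i = p.RHS x' i := by
  have hs : ∀ w : ℕ → ℝ, ∑ j ∈ Finset.Icc 1 p.d, w j * x j
      = ∑ j ∈ Finset.Icc 1 p.d, w j * x' j := by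
    intro w
    refine Finset.sum_congr rfl fun j hj => ?_
    rw [Finset.mem_Icc] at hj
    rw [h j hj.2]
  have h0 : x 0 = x' 0 := h 0 (Nat.zero_le _)
  match i with
  | 0 => simp [Params.RHS, rhsODE, lamGen, muGen, hs, h0]
  | 1 =>
    have h1 : x 1 = x' 1 := h 1 hi
    simp [Params.RHS, rhsODE, lamGen, muGen, hs, h0, h1]
  | (n+2) =>
    have h1 : x (n+2) = x' (n+2) := h _ hi
    have h2 : x (n+1) = x' (n+1) := h _ (by omega)
    have hne : n + 2 ≠ 1 := by omega
    simp [Params.RHS, rhsODE, lamGen, muGen, hs, h0, h1, h2, hne]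

/-- quasipositivity -/
lemma RHS_qp (hp : p.Good) {x : ℕ → ℝ} (hx : ∀ j, j ≤ p.d → 0 ≤ x j)
    {i : ℕ} (hi : i ≤ p.d) (hxi : x i = 0) : 0 ≤ p.RHS x i := by
  have hlam0 : 0 ≤ lamGen p.d p.f0 p.K10 p.a x :=
    lamGen_nonneg hp.hf0 hp.hK10 (fun j h1 h2 => (hp.ha j h1 h2).1) hx
  match i with
  | 0 => simp [Params.RHS, rhsODE, hxi]
  | 1 =>
    simp [Params.RHS, rhsODE, hxi]
    exact mul_nonneg hlam0 (hx 0 (Nat.zero_le _))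
  | (n+2) =>
    have hne : n + 2 ≠ 1 := by omega
    simp [Params.RHS, rhsODE, hxi, hne]
    exact mul_nonneg (lamGen_nonneg (hp.hf _ (by omega) (by omega))
      (hp.hK1 _ (by omega) (by omega)) (fun j h1 h2 => (hp.hw1 j h1 h2).1) hx) (hx _ (by omega))

end Stmt0

namespace Stmt0

open Set Filter Metric

variable (p : Params)

/-- the vector field on `ℝ^{d+1}` -/
noncomputable def Params.Fv (x : Fin (p.d + 1) → ℝ) : Fin (p.d + 1) → ℝ :=
  fun i => p.RHS (p.emb x) i.val

/-- scalar clamp -/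
def clR (M r : ℝ) : ℝ := max 0 (min r M)

lemma clR_nonneg (M r : ℝ) : 0 ≤ clR M r := le_max_left _ _

lemma clR_le {M : ℝ} (hM : 0 ≤ M) (r : ℝ) : clR M r ≤ M :=
  max_le hM (min_le_right _ _)

lemma clR_eq {M r : ℝ} (h0 : 0 ≤ r) (hM : r ≤ M) : clR M r = r := by
  rw [clR, min_eq_left hM, max_eq_right h0]

lemma clR_eq_zero {M r : ℝ} (hr : r ≤ 0) : clR M r = 0 :=
  max_eq_left (le_trans (min_le_left _ _) hr)

lemma clR_lip (M x y : ℝ) : |clR M x - clR M y| ≤ |x - y| := by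
  have h1 : |clR M x - clR M y| ≤ |min x M - min y M| := by
    rw [clR, clR, max_comm 0 (min x M), max_comm 0 (min y M)]
    exact abs_max_sub_max_le_abs _ _ _
  refine h1.trans ?_
  have := abs_min_sub_min_le_max x M y M
  simpa using this

/-- vector clamp -/
def Params.clV (M : ℝ) (x : Fin (p.d + 1) → ℝ) : Fin (p.d + 1) → ℝ :=
  fun i => clR M (x i)

lemma Params.clV_lip (M : ℝ) : LipschitzWith 1 (p.clV M) := by
  refine LipschitzWith.of_dist_le_mul fun x y => ?_
  rw [NNReal.coe_one, one_mul]
  refine (dist_pi_le_iff dist_nonneg).2 fun i => ?_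
  rw [Real.dist_eq]
  calc |p.clV M x i - p.clV M y i| ≤ |x i - y i| := clR_lip M (x i) (y i)
    _ ≤ dist x y := by rw [← Real.dist_eq]; exact dist_le_pi_dist x y i

/-- the clamped vector field -/
noncomputable def Params.Gv (M : ℝ) (x : Fin (p.d + 1) → ℝ) : Fin (p.d + 1) → ℝ :=
  p.Fv (p.clV M x)

/-- the box -/
def Params.Box (M : ℝ) : Set (Fin (p.d + 1) → ℝ) :=
  Set.pi Set.univ fun _ => Set.Icc (0 : ℝ) M

lemma Params.mem_Box {M : ℝ} {x : Fin (p.d + 1) → ℝ} :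
    x ∈ p.Box M ↔ ∀ i, x i ∈ Set.Icc (0 : ℝ) M := by
  constructor
  · intro h i; exact h i (Set.mem_univ i)
  · intro h i _; exact h i

lemma Params.clV_mem_Box {M : ℝ} (hM : 0 ≤ M) (x : Fin (p.d + 1) → ℝ) :
    p.clV M x ∈ p.Box M :=
  p.mem_Box.2 fun i => ⟨clR_nonneg _ _, clR_le hM _⟩

lemma Params.clV_id {M : ℝ} {x : Fin (p.d + 1) → ℝ} (hx : x ∈ p.Box M) :
    p.clV M x = x := by
  funext i
  exact clR_eq (p.mem_Box.1 hx i).1 (p.mem_Box.1 hx i).2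

/-- the linear sums -/
def Params.S (w : ℕ → ℝ) (x : Fin (p.d + 1) → ℝ) : ℝ :=
  ∑ j ∈ Finset.Icc 1 p.d, w j * p.emb x j

lemma Params.S_add (w : ℕ → ℝ) (x y : Fin (p.d + 1) → ℝ) :
    p.S w (x + y) = p.S w x + p.S w y := by
  rw [Params.S, Params.S, Params.S, ← Finset.sum_add_distrib]
  exact Finset.sum_congr rfl fun j _ => by rw [p.emb_add]; ring

lemma Params.S_smul (w : ℕ → ℝ) (c : ℝ) (x : Fin (p.d + 1) → ℝ) :
    p.S w (c • x) = c * p.S w x := by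
  rw [Params.S, Params.S, Finset.mul_sum]
  exact Finset.sum_congr rfl fun j _ => by rw [p.emb_smul]; ring

lemma Params.coord_contDiff (j : ℕ) :
    ContDiff ℝ 1 fun x : Fin (p.d + 1) → ℝ => p.emb x j := by
  by_cases h : j < p.d + 1
  · simp only [Params.emb, dif_pos h]
    exact contDiff_apply _ _ _
  · simp only [Params.emb, dif_neg h]
    exact contDiff_const

lemma Params.S_contDiff (w : ℕ → ℝ) : ContDiff ℝ 1 (p.S w) := by
  refine ContDiff.sum fun j _ => ?_
  exact contDiff_const.mul (p.coord_contDiff j)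

/-- open region where denominators are positive -/
def Params.U : Set (Fin (p.d + 1) → ℝ) :=
  {x | 0 < 1 + p.K10 * p.S p.a x} ∩
    ⋂ i ∈ Finset.Icc 1 p.d, {x | 0 < 1 + p.K1 i * p.S p.w1 x}

lemma Params.mem_U {x : Fin (p.d + 1) → ℝ} :
    x ∈ p.U ↔ 0 < 1 + p.K10 * p.S p.a x ∧
      ∀ i, 1 ≤ i → i ≤ p.d → 0 < 1 + p.K1 i * p.S p.w1 x := by
  simp [Params.U, Finset.mem_Icc, and_imp]

lemma Params.U_open : IsOpen p.U := by
  refine IsOpen.inter ?_ (isOpen_biInter_finset fun i _ => ?_)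
  · exact isOpen_lt continuous_const
      (continuous_const.add (continuous_const.mul (p.S_contDiff p.a).continuous))
  · exact isOpen_lt continuous_const
      (continuous_const.add (continuous_const.mul (p.S_contDiff p.w1).continuous))

lemma Params.U_convex : Convex ℝ p.U := by
  have hhalf : ∀ (K : ℝ) (w : ℕ → ℝ), Convex ℝ {x : Fin (p.d + 1) → ℝ | 0 < 1 + K * p.S w x} := by
    intro K w
    have hlin : IsLinearMap ℝ fun x : Fin (p.d + 1) → ℝ => K * p.S w x :=
      ⟨fun x y => by rw [p.S_add]; ring, fun c x => by rw [p.S_smul]; simp; ring⟩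
    have : {x : Fin (p.d + 1) → ℝ | 0 < 1 + K * p.S w x}
        = {x : Fin (p.d + 1) → ℝ | (-1 : ℝ) < K * p.S w x} := by
      ext x; simp; constructor <;> intro h <;> linarith
    rw [this]
    exact convex_halfSpace_gt hlin (-1)
  exact Convex.inter (hhalf _ _) (convex_iInter fun i => convex_iInter fun _ => hhalf _ _)

lemma Params.mem_U_of_nonneg (hp : p.Good) {x : Fin (p.d + 1) → ℝ} (hx : ∀ i, 0 ≤ x i) :
    x ∈ p.U := by
  have he : ∀ j, j ≤ p.d → 0 ≤ p.emb x j := fun j _ => p.emb_nonneg hx j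
  refine p.mem_U.2 ⟨?_, fun i h1 h2 => ?_⟩
  · have := den_ge_one hp.hK10 (fun j hj1 hj2 => (hp.ha j hj1 hj2).1) he
    dsimp [Params.S]; linarith
  · have := den_ge_one (hp.hK1 i h1 h2) (fun j hj1 hj2 => (hp.hw1 j hj1 hj2).1) he
    dsimp [Params.S]; linarith

lemma Params.Box_subset_U (hp : p.Good) (M : ℝ) : p.Box M ⊆ p.U :=
  fun _x hx => p.mem_U_of_nonneg hp fun i => (p.mem_Box.1 hx i).1

lemma Params.Box_compact (M : ℝ) : IsCompact (p.Box M) :=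
  isCompact_univ_pi fun _ => isCompact_Icc

lemma Params.Box_convex (M : ℝ) : Convex ℝ (p.Box M) :=
  convex_pi fun _ _ => convex_Icc _ _

lemma Params.Fv_contDiffOn (hp : p.Good) : ContDiffOn ℝ 1 p.Fv p.U := by
  have hlamOn : ∀ (fi Ki : ℝ) (w : ℕ → ℝ),
      ContDiffOn ℝ 1 (fun x : Fin (p.d + 1) → ℝ => fi / (1 + Ki * p.S w x))
        {x | 0 < 1 + Ki * p.S w x} := fun fi Ki w =>
    ContDiffOn.div contDiffOn_const
      ((contDiff_const.add (contDiff_const.mul (p.S_contDiff w))).contDiffOn)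
      (fun x hx => ne_of_gt hx)
  have hmu : ∀ (gi Ki : ℝ) (w : ℕ → ℝ),
      ContDiff ℝ 1 (fun x : Fin (p.d + 1) → ℝ => gi * (1 + Ki * p.S w x)) := fun gi Ki w =>
    contDiff_const.mul (contDiff_const.add (contDiff_const.mul (p.S_contDiff w)))
  have hUa : p.U ⊆ {x | 0 < 1 + p.K10 * p.S p.a x} := fun x hx => (p.mem_U.1 hx).1
  have hUw : ∀ k, 1 ≤ k → k ≤ p.d → p.U ⊆ {x | 0 < 1 + p.K1 k * p.S p.w1 x} :=
    fun k h1 h2 x hx => (p.mem_U.1 hx).2 k h1 h2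
  refine contDiffOn_pi.2 fun i => ?_
  have hvi : (i : ℕ) ≤ p.d := Nat.lt_succ_iff.1 i.isLt
  rcases Nat.lt_or_ge (i : ℕ) 1 with h0 | h1
  · -- i = 0
    have h0' : (i : ℕ) = 0 := by omega
    have heq : (fun x => p.Fv x i)
        = fun x : Fin (p.d + 1) → ℝ =>
            -(p.f0 / (1 + p.K10 * p.S p.a x) + p.g0 * (1 + p.K20 * p.S p.b x)) * p.emb x 0 := by
      funext x
      simp [Params.Fv, Params.RHS, rhsODE, lamGen, muGen, Params.S, h0']
    rw [heq]
    exact ((((hlamOn _ _ _).mono hUa).add ((hmu p.g0 p.K20 p.b).contDiffOn)).neg).mul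
      ((p.coord_contDiff 0).contDiffOn)
  rcases Nat.lt_or_ge (i : ℕ) 2 with h2 | h2
  · -- i = 1
    have h1' : (i : ℕ) = 1 := by omega
    have heq : (fun x => p.Fv x i)
        = fun x : Fin (p.d + 1) → ℝ =>
            p.f0 / (1 + p.K10 * p.S p.a x) * p.emb x 0
              - (p.f 1 / (1 + p.K1 1 * p.S p.w1 x)
                  + p.g 1 * (1 + p.K2 1 * p.S p.w2 x)) * p.emb x 1 := by
      funext x
      simp [Params.Fv, Params.RHS, rhsODE, lamGen, muGen, Params.S, h1']
    rw [heq]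
    exact (((hlamOn _ _ _).mono hUa).mul ((p.coord_contDiff 0).contDiffOn)).sub
      ((((hlamOn _ _ _).mono (hUw 1 le_rfl hp.hd)).add
        ((hmu _ _ _).contDiffOn)).mul ((p.coord_contDiff 1).contDiffOn))
  · -- 2 ≤ i
    have hne0 : (i : ℕ) ≠ 0 := by omega
    have hne1 : (i : ℕ) ≠ 1 := by omega
    have heq : (fun x => p.Fv x i)
        = fun x : Fin (p.d + 1) → ℝ =>
            p.f ((i : ℕ) - 1) / (1 + p.K1 ((i : ℕ) - 1) * p.S p.w1 x) * p.emb x ((i : ℕ) - 1)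
              - (p.f (i : ℕ) / (1 + p.K1 (i : ℕ) * p.S p.w1 x)
                  + p.g (i : ℕ) * (1 + p.K2 (i : ℕ) * p.S p.w2 x)) * p.emb x (i : ℕ) := by
      funext x
      simp [Params.Fv, Params.RHS, rhsODE, lamGen, muGen, Params.S, hne0, hne1]
    rw [heq]
    exact (((hlamOn _ _ _).mono (hUw _ (by omega) (by omega))).mul
        ((p.coord_contDiff _).contDiffOn)).sub
      ((((hlamOn _ _ _).mono (hUw _ (by omega) hvi)).add
        ((hmu _ _ _).contDiffOn)).mul ((p.coord_contDiff _).contDiffOn))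

lemma Params.Fv_lipschitzOn (hp : p.Good) {s : Set (Fin (p.d + 1) → ℝ)}
    (hs : IsCompact s) (hconv : Convex ℝ s) (hsub : s ⊆ p.U) :
    ∃ L : NNReal, LipschitzOnWith L p.Fv s := by
  have hF := p.Fv_contDiffOn hp
  have hUopen := p.U_open
  have hdiff : ∀ x ∈ s, DifferentiableAt ℝ p.Fv x := fun x hx =>
    ((hF.differentiableOn one_ne_zero).differentiableAt (hUopen.mem_nhds (hsub hx)))
  have hcont : ContinuousOn (fderiv ℝ p.Fv) s :=
    (hF.continuousOn_fderiv_of_isOpen hUopen le_rfl).mono hsub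
  obtain ⟨C, hC⟩ := hs.exists_bound_of_continuousOn hcont
  refine ⟨⟨max C 0, le_max_right _ _⟩,
    Convex.lipschitzOnWith_of_nnnorm_fderiv_le hdiff (fun x hx => ?_) hconv⟩
  have h1 : ‖fderiv ℝ p.Fv x‖ ≤ max C 0 := le_trans (hC x hx) (le_max_left _ _)
  show (‖fderiv ℝ p.Fv x‖₊ : ℝ) ≤ max C 0
  exact h1

end Stmt0

namespace Stmt0

open Set Filter Metric Topology

variable (p : Params)

lemma Params.Gv_lipschitz (hp : p.Good) {M : ℝ} (hM : 0 ≤ M) :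
    ∃ L : NNReal, LipschitzWith L (p.Gv M) := by
  obtain ⟨L, hL⟩ := p.Fv_lipschitzOn hp (p.Box_compact M) (p.Box_convex M) (p.Box_subset_U hp M)
  refine ⟨L * 1, ?_⟩
  have h2 := hL.comp ((p.clV_lip M).lipschitzOnWith (s := Set.univ))
    (fun x _ => p.clV_mem_Box hM x)
  rw [lipschitzOnWith_univ] at h2
  exact h2

lemma Params.Gv_bdd (hp : p.Good) {M : ℝ} (hM : 0 ≤ M) :
    ∃ C : ℝ, 0 ≤ C ∧ ∀ x, ‖p.Gv M x‖ ≤ C := by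
  have hcont : ContinuousOn p.Fv (p.Box M) :=
    ((p.Fv_contDiffOn hp).continuousOn).mono (p.Box_subset_U hp M)
  obtain ⟨C, hC⟩ := (p.Box_compact M).exists_bound_of_continuousOn hcont
  exact ⟨max C 0, le_max_right _ _, fun x =>
    le_trans (hC _ (p.clV_mem_Box hM x)) (le_max_left _ _)⟩

lemma Params.Gv_qp (hp : p.Good) (M : ℝ) {x : Fin (p.d + 1) → ℝ} (i : Fin (p.d + 1))
    (hxi : x i ≤ 0) : 0 ≤ p.Gv M x i := by
  have hnn : ∀ j, j ≤ p.d → 0 ≤ p.emb (p.clV M x) j :=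
    fun j _ => p.emb_nonneg (fun k => clR_nonneg _ _) j
  have hval : p.emb (p.clV M x) i.val = 0 := by
    rw [p.emb_coe _ (Nat.lt_succ_iff.1 i.isLt)]
    show clR M (x ⟨i.val, _⟩) = 0
    rw [Fin.eta]
    exact clR_eq_zero hxi
  exact RHS_qp p hp hnn (Nat.lt_succ_iff.1 i.isLt) hval

lemma Params.Gv_sum (hp : p.Good) (M : ℝ) (x : Fin (p.d + 1) → ℝ) :
    ∑ i, p.Gv M x i
      = -(muGen p.d p.g0 p.K20 p.b (p.emb (p.clV M x)) * p.emb (p.clV M x) 0)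
        - ∑ i ∈ Finset.Icc 1 p.d,
            muGen p.d (p.g i) (p.K2 i) p.w2 (p.emb (p.clV M x)) * p.emb (p.clV M x) i := by
  rw [show ∑ i, p.Gv M x i = ∑ n ∈ Finset.range (p.d + 1), p.RHS (p.emb (p.clV M x)) n from
    Fin.sum_univ_eq_sum_range _ _]
  exact sum_RHS p hp _

lemma Params.Gv_sum_nonpos (hp : p.Good) (M : ℝ) (x : Fin (p.d + 1) → ℝ) :
    ∑ i, p.Gv M x i ≤ 0 := by
  rw [p.Gv_sum hp M x]
  have hnn : ∀ j, j ≤ p.d → 0 ≤ p.emb (p.clV M x) j :=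
    fun j _ => p.emb_nonneg (fun k => clR_nonneg _ _) j
  have h0 : 0 ≤ muGen p.d p.g0 p.K20 p.b (p.emb (p.clV M x)) * p.emb (p.clV M x) 0 :=
    mul_nonneg (muGen_nonneg hp.hg0 hp.hK20 (fun j h1 h2 => (hp.hb j h1 h2).1) hnn)
      (hnn 0 (Nat.zero_le _))
  have hs : 0 ≤ ∑ i ∈ Finset.Icc 1 p.d,
      muGen p.d (p.g i) (p.K2 i) p.w2 (p.emb (p.clV M x)) * p.emb (p.clV M x) i := by
    refine Finset.sum_nonneg fun i hi => ?_
    rw [Finset.mem_Icc] at hi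
    exact mul_nonneg (muGen_nonneg (hp.hg i hi.1 hi.2) (hp.hK2 i hi.1 hi.2)
      (fun j h1 h2 => (hp.hw2 j h1 h2).1) hnn) (hnn i hi.2)
  linarith

lemma Params.exists_sol (hp : p.Good) {M : ℝ} (hM : 0 ≤ M) (x₀ : Fin (p.d + 1) → ℝ) (n : ℕ) :
    ∃ Y : ℝ → (Fin (p.d + 1) → ℝ), Y 0 = x₀ ∧
      ∀ t ∈ Icc (-1 : ℝ) (n : ℝ), HasDerivWithinAt Y (p.Gv M (Y t)) (Icc (-1 : ℝ) (n : ℝ)) t := by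
  obtain ⟨L, hL⟩ := p.Gv_lipschitz hp hM
  obtain ⟨C, hC0, hC⟩ := p.Gv_bdd hp hM
  have hn : (0 : ℝ) ≤ n := Nat.cast_nonneg n
  have hpl : IsPicardLindelof (fun _ x => p.Gv M x) (tmin := -1) (tmax := n)
      ⟨0, ⟨by norm_num, hn⟩⟩ x₀ ⟨C * (n + 1) + 1, by positivity⟩ 0 ⟨C, hC0⟩ L :=
    { lipschitzOnWith := fun t _ => hL.lipschitzOnWith
      continuousOn := fun x _ => continuousOn_const
      norm_le := fun t _ x _ => hC x
      mul_max_le := by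
        show C * max ((n : ℝ) - 0) (0 - (-1)) ≤ (C * (n + 1) + 1) - 0
        have h1 : max ((n : ℝ) - 0) (0 - (-1)) ≤ (n : ℝ) + 1 := by
          apply max_le <;> linarith
        nlinarith [mul_le_mul_of_nonneg_left h1 hC0] }
  obtain ⟨Y, hY0, hY⟩ := hpl.exists_eq_forall_mem_Icc_hasDerivWithinAt₀
  exact ⟨Y, hY0, hY⟩

lemma Params.exists_glob (hp : p.Good) {M : ℝ} (hM : 0 ≤ M) (x₀ : Fin (p.d + 1) → ℝ) :
    ∃ Y : ℝ → (Fin (p.d + 1) → ℝ), Y 0 = x₀ ∧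
      ∀ t, 0 ≤ t → HasDerivAt Y (p.Gv M (Y t)) t := by
  classical
  choose Ysol hY0 hYd using fun n : ℕ => p.exists_sol hp hM x₀ n
  have hder : ∀ n : ℕ, ∀ t ∈ Ioo (-1 : ℝ) (n : ℝ), HasDerivAt (Ysol n) (p.Gv M (Ysol n t)) t :=
    fun n t ht => (hYd n t (Ioo_subset_Icc_self ht)).hasDerivAt (Icc_mem_nhds ht.1 ht.2)
  have hcontIcc : ∀ n : ℕ, ContinuousOn (Ysol n) (Icc (-1 : ℝ) (n : ℝ)) :=
    fun n t ht => (hYd n t ht).continuousWithinAt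
  obtain ⟨L, hL⟩ := p.Gv_lipschitz hp hM
  have hcons : ∀ m n : ℕ, m ≤ n → Set.EqOn (Ysol m) (Ysol n) (Icc (0 : ℝ) (m : ℝ)) := by
    intro m n hmn
    have hmn' : (m : ℝ) ≤ n := Nat.cast_le.2 hmn
    refine ODE_solution_unique (v := fun _ x => p.Gv M x) (K := L) (fun _ => hL) ?_ ?_ ?_ ?_ ?_
    · exact (hcontIcc m).mono (fun t ht => ⟨by linarith [ht.1], ht.2⟩)
    · intro t ht
      exact (hder m t ⟨by linarith [ht.1], ht.2⟩).hasDerivWithinAt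
    · exact (hcontIcc n).mono (fun t ht => ⟨by linarith [ht.1], by linarith [ht.2]⟩)
    · intro t ht
      exact (hder n t ⟨by linarith [ht.1], by linarith [ht.2]⟩).hasDerivWithinAt
    · rw [hY0 m, hY0 n]
  set Yg : ℝ → (Fin (p.d + 1) → ℝ) :=
    fun s => if s < 0 then Ysol 1 s else Ysol (⌈s⌉₊ + 1) s with hYg
  have hYgeq : ∀ (s : ℝ) (n : ℕ), 0 ≤ s → s ≤ n → Yg s = Ysol n s := by
    intro s n hs hsn
    have hnot : ¬s < 0 := not_lt.2 hs
    rw [hYg]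
    simp only [hnot, if_false]
    have h1 : s ≤ ((⌈s⌉₊ + 1 : ℕ) : ℝ) := by push_cast; linarith [Nat.le_ceil s]
    rcases le_total (⌈s⌉₊ + 1) n with h | h
    · exact hcons _ n h ⟨hs, h1⟩
    · exact (hcons n _ h ⟨hs, hsn⟩).symm
  have hYg0 : Yg 0 = x₀ := by
    rw [hYgeq 0 1 le_rfl (by norm_num), hY0]
  refine ⟨Yg, hYg0, ?_⟩
  intro t ht
  rcases eq_or_lt_of_le ht with rfl | htpos
  · have hEq : ∀ s ∈ Ioo (-1 : ℝ) (1 : ℝ), Yg s = Ysol 1 s := by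
      intro s hs
      rcases lt_or_ge s 0 with h | h
      · rw [hYg]; simp [h]
      · exact hYgeq s 1 h (by exact_mod_cast le_of_lt hs.2)
    have h1 : HasDerivAt (Ysol 1) (p.Gv M (Ysol 1 0)) 0 := by
      refine hder 1 0 ?_
      constructor <;> norm_num
    have hmem : Ioo (-1 : ℝ) (1 : ℝ) ∈ 𝓝 (0 : ℝ) :=
      isOpen_Ioo.mem_nhds ⟨by norm_num, by norm_num⟩
    have h2 := h1.congr_of_eventuallyEq (Filter.eventually_of_mem hmem hEq)
    rw [show Yg 0 = Ysol 1 0 from hEq 0 ⟨by norm_num, by norm_num⟩]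
    exact h2
  · set n := ⌈t⌉₊ + 1 with hn
    have htn : t < (n : ℝ) := by
      have := Nat.le_ceil t
      rw [hn]; push_cast; linarith
    have hEq : ∀ s ∈ Ioo (0 : ℝ) (n : ℝ), Yg s = Ysol n s :=
      fun s hs => hYgeq s n (le_of_lt hs.1) (le_of_lt hs.2)
    have hmem : Ioo (0 : ℝ) (n : ℝ) ∈ 𝓝 t := isOpen_Ioo.mem_nhds ⟨htpos, htn⟩
    have h1 : HasDerivAt (Ysol n) (p.Gv M (Ysol n t)) t := hder n t ⟨by linarith, htn⟩
    have h2 := h1.congr_of_eventuallyEq (Filter.eventually_of_mem hmem hEq)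
    rw [show Yg t = Ysol n t from hEq t ⟨htpos, htn⟩]
    exact h2

end Stmt0

namespace Stmt0

open Set Filter Metric Topology

variable (p : Params)

lemma Params.S_isLinear (K : ℝ) (w : ℕ → ℝ) :
    IsLinearMap ℝ fun x : Fin (p.d + 1) → ℝ => K * p.S w x :=
  ⟨fun x y => by rw [p.S_add]; ring, fun c x => by rw [p.S_smul]; simp; ring⟩

lemma Params.half_convex (c K : ℝ) (w : ℕ → ℝ) :
    Convex ℝ {x : Fin (p.d + 1) → ℝ | c ≤ 1 + K * p.S w x} := by
  have : {x : Fin (p.d + 1) → ℝ | c ≤ 1 + K * p.S w x}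
      = {x : Fin (p.d + 1) → ℝ | c - 1 ≤ K * p.S w x} := by
    ext x; simp only [Set.mem_setOf_eq]; constructor <;> intro h <;> linarith
  rw [this]
  exact convex_halfSpace_ge (p.S_isLinear K w) _

lemma Params.den_ge_one' (hp : p.Good) {x : Fin (p.d + 1) → ℝ} (hx : ∀ i, 0 ≤ x i) :
    (1 : ℝ) ≤ 1 + p.K10 * p.S p.a x ∧
      ∀ k, 1 ≤ k → k ≤ p.d → (1 : ℝ) ≤ 1 + p.K1 k * p.S p.w1 x := by
  have he : ∀ j, j ≤ p.d → 0 ≤ p.emb x j := fun j _ => p.emb_nonneg hx j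
  constructor
  · exact den_ge_one hp.hK10 (fun j h1 h2 => (hp.ha j h1 h2).1) he
  · exact fun k h1 h2 => den_ge_one (hp.hK1 k h1 h2) (fun j hj1 hj2 => (hp.hw1 j hj1 hj2).1) he

/-- nonnegativity of the solution of the clamped system -/
lemma Params.sol_nonneg (hp : p.Good) (M : ℝ) {Y : ℝ → Fin (p.d + 1) → ℝ}
    (hY0 : ∀ i, 0 ≤ Y 0 i)
    (hYd : ∀ t, 0 ≤ t → HasDerivAt Y (p.Gv M (Y t)) t) :
    ∀ t, 0 ≤ t → ∀ i, 0 ≤ Y t i := by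
  intro t1 ht1 i
  by_contra hneg
  push_neg at hneg
  have hφd : ∀ s, 0 ≤ s → HasDerivAt (fun u => Y u i) (p.Gv M (Y s) i) s :=
    fun s hs => (hasDerivAt_pi.1 (hYd s hs)) i
  have hcont : ∀ s, 0 ≤ s → ContinuousAt (fun u => Y u i) s := fun s hs => (hφd s hs).continuousAt
  set S := {s | s ∈ Icc (0 : ℝ) t1 ∧ 0 ≤ Y s i} with hSdef
  have hS0 : (0 : ℝ) ∈ S := ⟨⟨le_rfl, ht1⟩, hY0 i⟩
  have hSbdd : BddAbove S := ⟨t1, fun s hs => hs.1.2⟩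
  have hSclosed : IsClosed S := by
    have hcOn : ContinuousOn (fun u => Y u i) (Icc 0 t1) :=
      fun s hs => (hcont s hs.1).continuousWithinAt
    have hSeq : S = Icc (0 : ℝ) t1 ∩ (fun u => Y u i) ⁻¹' (Ici 0) := rfl
    rw [hSeq]
    exact hcOn.preimage_isClosed_of_isClosed isClosed_Icc isClosed_Ici
  set t0 := sSup S with ht0def
  have ht0S : t0 ∈ S := hSclosed.csSup_mem ⟨0, hS0⟩ hSbdd
  have ht0le : t0 ≤ t1 := ht0S.1.2
  have ht00 : 0 ≤ t0 := ht0S.1.1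
  have ht0φ : 0 ≤ Y t0 i := ht0S.2
  have ht0lt : t0 < t1 := by
    rcases lt_or_eq_of_le ht0le with h | h
    · exact h
    · exfalso; rw [h] at ht0φ; linarith
  have hlt : ∀ s, t0 < s → s ≤ t1 → Y s i < 0 := by
    intro s hs1 hs2
    by_contra hge
    push_neg at hge
    have hsS : s ∈ S := ⟨⟨le_trans ht00 (le_of_lt hs1), hs2⟩, hge⟩
    exact absurd (le_csSup hSbdd hsS) (not_le.2 hs1)
  have hmono : MonotoneOn (fun u => Y u i) (Icc t0 t1) := by
    refine monotoneOn_of_deriv_nonneg (convex_Icc _ _) ?_ ?_ ?_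
    · exact fun s hs => (hcont s (le_trans ht00 hs.1)).continuousWithinAt
    · intro s hs
      rw [interior_Icc] at hs
      exact ((hφd s (le_trans ht00 (le_of_lt hs.1))).differentiableAt).differentiableWithinAt
    · intro s hs
      rw [interior_Icc] at hs
      rw [(hφd s (le_trans ht00 (le_of_lt hs.1))).deriv]
      exact p.Gv_qp hp M i (le_of_lt (hlt s hs.1 (le_of_lt hs.2)))
  have := hmono (left_mem_Icc.2 (le_of_lt ht0lt)) (right_mem_Icc.2 (le_of_lt ht0lt))
    (le_of_lt ht0lt)
  simp only at this
  linarith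

/-- the total mass is nonincreasing for the clamped system -/
lemma Params.sol_sum_anti (hp : p.Good) (M : ℝ) {Y : ℝ → Fin (p.d + 1) → ℝ}
    (hYd : ∀ t, 0 ≤ t → HasDerivAt Y (p.Gv M (Y t)) t) :
    AntitoneOn (fun s => ∑ i, Y s i) (Ici (0 : ℝ)) := by
  have hder : ∀ s, 0 ≤ s →
      HasDerivAt (fun u => ∑ i, Y u i) (∑ i, p.Gv M (Y s) i) s := by
    intro s hs
    exact HasDerivAt.fun_sum fun i _ => (hasDerivAt_pi.1 (hYd s hs)) i
  refine antitoneOn_of_deriv_nonpos (convex_Ici 0) ?_ ?_ ?_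
  · exact fun s hs => (hder s hs).continuousAt.continuousWithinAt
  · intro s hs
    rw [interior_Ici] at hs
    exact ((hder s (le_of_lt hs)).differentiableAt).differentiableWithinAt
  · intro s hs
    rw [interior_Ici] at hs
    rw [(hder s (le_of_lt hs)).deriv]
    exact p.Gv_sum_nonpos hp M (Y s)

end Stmt0

namespace Stmt0

open Set Filter Metric Topology

lemma main (p : Params) (hp : p.Good) (yin : ℕ → ℝ) (hyin : ∀ i, i ≤ p.d → 0 ≤ yin i) :
    ∃ y : ℝ → ℕ → ℝ,
      (∀ i, i ≤ p.d → y 0 i = yin i) ∧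
      (∀ t, 0 ≤ t → ∀ i, i ≤ p.d →
        HasDerivAt (fun s => y s i) (p.RHS (y t) i) t) ∧
      (∀ z : ℝ → ℕ → ℝ,
        (∀ i, i ≤ p.d → z 0 i = yin i) →
        (∀ t, 0 ≤ t → ∀ i, i ≤ p.d →
          HasDerivAt (fun s => z s i) (p.RHS (z t) i) t) →
        ∀ t, 0 ≤ t → ∀ i, i ≤ p.d → z t i = y t i) ∧
      (∀ t, 0 ≤ t → ∀ i, i ≤ p.d → 0 ≤ y t i) ∧
      (∀ t, 0 ≤ t →
        HasDerivAt (fun s => ∑ i ∈ Finset.range (p.d + 1), y s i)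
          (-(muGen p.d p.g0 p.K20 p.b (y t) * y t 0)
            - ∑ i ∈ Finset.Icc 1 p.d, muGen p.d (p.g i) (p.K2 i) p.w2 (y t) * y t i) t ∧
        (-(muGen p.d p.g0 p.K20 p.b (y t) * y t 0)
            - ∑ i ∈ Finset.Icc 1 p.d, muGen p.d (p.g i) (p.K2 i) p.w2 (y t) * y t i) ≤ 0) ∧
      (∀ s t, 0 ≤ s → s ≤ t →
        ∑ i ∈ Finset.range (p.d + 1), y t i ≤ ∑ i ∈ Finset.range (p.d + 1), y s i) ∧
      (∀ i, i ≤ p.d → ∃ C : ℝ, ∀ t, 0 ≤ t → y t i ≤ C) := by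
  classical
  set x₀ : Fin (p.d + 1) → ℝ := fun i => yin i.val with hx₀def
  have hx₀nn : ∀ i, 0 ≤ x₀ i := fun i => hyin i.val (Nat.lt_succ_iff.1 i.isLt)
  set M0 : ℝ := ∑ i, x₀ i with hM0def
  have hM00 : 0 ≤ M0 := Finset.sum_nonneg fun i _ => hx₀nn i
  set M : ℝ := M0 + 1 with hMdef
  have hM0' : (0 : ℝ) ≤ M := by rw [hMdef]; linarith
  obtain ⟨Y, hY0, hYd⟩ := p.exists_glob hp hM0' x₀
  have hnn : ∀ t, 0 ≤ t → ∀ i, 0 ≤ Y t i :=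
    p.sol_nonneg hp M (fun i => by rw [hY0]; exact hx₀nn i) hYd
  have hanti := p.sol_sum_anti hp M hYd
  have hsumle : ∀ t, 0 ≤ t → ∑ i, Y t i ≤ M0 := by
    intro t ht
    have h1 := hanti (mem_Ici.2 (le_refl (0 : ℝ))) (mem_Ici.2 ht) ht
    simp only at h1
    rw [hY0] at h1
    rw [hM0def]
    exact h1
  have hbox : ∀ t, 0 ≤ t → Y t ∈ p.Box M := by
    intro t ht
    refine p.mem_Box.2 fun i => ⟨hnn t ht i, ?_⟩
    have h1 : Y t i ≤ ∑ j, Y t j :=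
      Finset.single_le_sum (f := fun j => Y t j) (fun j _ => hnn t ht j) (Finset.mem_univ i)
    have h2 := hsumle t ht
    rw [hMdef]
    linarith
  have hclV : ∀ t, 0 ≤ t → p.clV M (Y t) = Y t := fun t ht => p.clV_id (hbox t ht)
  have hFvd : ∀ t, 0 ≤ t → HasDerivAt Y (p.Fv (Y t)) t := by
    intro t ht
    have h1 := hYd t ht
    simp only [Params.Gv] at h1
    rw [hclV t ht] at h1
    exact h1
  have hyY : ∀ (t : ℝ) (i : ℕ) (hi : i ≤ p.d), p.emb (Y t) i = Y t ⟨i, by omega⟩ :=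
    fun t i hi => p.emb_coe (Y t) hi
  have hrange : ∀ u : ℝ, ∑ i ∈ Finset.range (p.d + 1), p.emb (Y u) i = ∑ i, Y u i := by
    intro u
    rw [← Fin.sum_univ_eq_sum_range (fun n => p.emb (Y u) n) (p.d + 1)]
    refine Finset.sum_congr rfl fun i _ => ?_
    rw [hyY u i.val (Nat.lt_succ_iff.1 i.isLt)]
  have hnormY : ∀ t, 0 ≤ t → ‖Y t‖ ≤ M := by
    intro t ht
    refine (pi_norm_le_iff_of_nonneg hM0').2 fun i => ?_
    rw [Real.norm_eq_abs, abs_le]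
    have hbi := p.mem_Box.1 (hbox t ht) i
    exact ⟨by linarith [hbi.1], hbi.2⟩
  refine ⟨fun t => p.emb (Y t), ?_, ?_, ?_, ?_, ?_, ?_, ?_⟩
  · -- initial condition
    intro i hi
    show p.emb (Y 0) i = yin i
    rw [hyY 0 i hi, hY0]
  · -- the ODE
    intro t ht i hi
    have hfun : (fun s => p.emb (Y s) i) = fun s => Y s ⟨i, by omega⟩ :=
      funext fun s => hyY s i hi
    rw [hfun]
    exact (hasDerivAt_pi.1 (hFvd t ht)) ⟨i, by omega⟩
  · -- uniqueness
    intro z hz0 hzd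
    set Z : ℝ → Fin (p.d + 1) → ℝ := fun t i => z t i.val with hZdef
    have hZd' : ∀ t, 0 ≤ t → HasDerivAt Z (p.Fv (Z t)) t := by
      intro t ht
      refine hasDerivAt_pi.2 fun i => ?_
      have h1 := hzd t ht i.val (Nat.lt_succ_iff.1 i.isLt)
      have h2 : p.RHS (z t) i.val = p.Fv (Z t) i := by
        show p.RHS (z t) i.val = p.RHS (p.emb (Z t)) i.val
        refine RHS_congr p (fun j hj => ?_) (Nat.lt_succ_iff.1 i.isLt)
        rw [p.emb_coe (Z t) hj]
      rw [← h2]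
      exact h1
    have hZ0' : Z 0 = Y 0 := by
      funext i
      rw [hY0]
      show z 0 i.val = x₀ i
      rw [hz0 i.val (Nat.lt_succ_iff.1 i.isLt)]
    -- the Lipschitz region
    have hcont1 : Continuous fun x : Fin (p.d + 1) → ℝ => 1 + p.K10 * p.S p.a x :=
      continuous_const.add (continuous_const.mul (p.S_contDiff p.a).continuous)
    have hcont2 : ∀ k : ℕ, Continuous fun x : Fin (p.d + 1) → ℝ => 1 + p.K1 k * p.S p.w1 x :=
      fun k => continuous_const.add (continuous_const.mul (p.S_contDiff p.w1).continuous)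
    set Vset : Set (Fin (p.d + 1) → ℝ) :=
      ({x | (1 : ℝ) / 2 < 1 + p.K10 * p.S p.a x} ∩
        ⋂ k ∈ Finset.Icc 1 p.d, {x | (1 : ℝ) / 2 < 1 + p.K1 k * p.S p.w1 x}) ∩
        Metric.ball 0 (M + 1) with hVdef
    set Wset : Set (Fin (p.d + 1) → ℝ) :=
      ({x | (1 : ℝ) / 2 ≤ 1 + p.K10 * p.S p.a x} ∩
        ⋂ k ∈ Finset.Icc 1 p.d, {x | (1 : ℝ) / 2 ≤ 1 + p.K1 k * p.S p.w1 x}) ∩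
        Metric.closedBall 0 (M + 1) with hWdef
    have hVopen : IsOpen Vset :=
      ((isOpen_lt continuous_const hcont1).inter
        (isOpen_biInter_finset fun k _ => isOpen_lt continuous_const (hcont2 k))).inter
        isOpen_ball
    have hWclosed : IsClosed Wset :=
      ((isClosed_le continuous_const hcont1).inter
        (isClosed_iInter fun k => isClosed_iInter fun _ =>
          isClosed_le continuous_const (hcont2 k))).inter Metric.isClosed_closedBall
    have hWcompact : IsCompact Wset :=
      (isCompact_closedBall (0 : Fin (p.d + 1) → ℝ) (M + 1)).of_isClosed_subset hWclosed
        Set.inter_subset_right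
    have hWconvex : Convex ℝ Wset :=
      (Convex.inter (p.half_convex _ _ _)
        (convex_iInter fun k => convex_iInter fun _ => p.half_convex _ _ _)).inter
        (convex_closedBall _ _)
    have hWsubU : Wset ⊆ p.U := by
      intro x hx
      refine p.mem_U.2 ⟨?_, fun k h1 h2 => ?_⟩
      · have := hx.1.1
        show (0 : ℝ) < 1 + p.K10 * p.S p.a x
        have h' : (1 : ℝ) / 2 ≤ 1 + p.K10 * p.S p.a x := this
        linarith
      · have h' : x ∈ {x | (1 : ℝ) / 2 ≤ 1 + p.K1 k * p.S p.w1 x} :=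
          Set.mem_iInter₂.1 hx.1.2 k (Finset.mem_Icc.2 ⟨h1, h2⟩)
        have h'' : (1 : ℝ) / 2 ≤ 1 + p.K1 k * p.S p.w1 x := h'
        linarith
    have hYV : ∀ t, 0 ≤ t → Y t ∈ Vset := by
      intro t ht
      have hden := p.den_ge_one' hp (fun i => hnn t ht i)
      refine ⟨⟨?_, Set.mem_iInter₂.2 fun k hk => ?_⟩, ?_⟩
      · show (1 : ℝ) / 2 < 1 + p.K10 * p.S p.a (Y t)
        linarith [hden.1]
      · rw [Finset.mem_Icc] at hk
        show (1 : ℝ) / 2 < 1 + p.K1 k * p.S p.w1 (Y t)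
        linarith [hden.2 k hk.1 hk.2]
      · rw [mem_ball_zero_iff]
        linarith [hnormY t ht]
    have hVW : Vset ⊆ Wset := by
      intro x hx
      have h1 : (1 : ℝ) / 2 < 1 + p.K10 * p.S p.a x := hx.1.1
      refine ⟨⟨show (1 : ℝ) / 2 ≤ 1 + p.K10 * p.S p.a x by linarith,
        Set.mem_iInter₂.2 fun k hk => ?_⟩,
        ball_subset_closedBall hx.2⟩
      have h' : (1 : ℝ) / 2 < 1 + p.K1 k * p.S p.w1 x := Set.mem_iInter₂.1 hx.1.2 k hk
      show (1 : ℝ) / 2 ≤ 1 + p.K1 k * p.S p.w1 x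
      linarith
    have hYW : ∀ t, 0 ≤ t → Y t ∈ Wset := fun t ht => hVW (hYV t ht)
    obtain ⟨LW, hLW⟩ := p.Fv_lipschitzOn hp hWcompact hWconvex hWsubU
    -- local uniqueness step
    have hstep : ∀ T, 0 ≤ T → Z T = Y T → ∃ ε > 0, Set.EqOn Z Y (Icc T (T + ε)) := by
      intro T hT hZT
      have hZTV : Z T ∈ Vset := by rw [hZT]; exact hYV T hT
      have hpre : Z ⁻¹' Vset ∈ 𝓝 T :=
        (hZd' T hT).continuousAt.preimage_mem_nhds (hVopen.mem_nhds hZTV)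
      obtain ⟨δ, hδ, hball⟩ := Metric.mem_nhds_iff.1 hpre
      refine ⟨δ / 2, half_pos hδ, ?_⟩
      refine ODE_solution_unique_of_mem_Icc_right (v := fun _ x => p.Fv x)
        (s := fun _ => Wset) (fun _ _ => hLW) ?_ ?_ ?_ ?_ ?_ ?_ hZT
      · exact fun u hu => ((hZd' u (le_trans hT hu.1)).continuousAt).continuousWithinAt
      · exact fun u hu => (hZd' u (le_trans hT hu.1)).hasDerivWithinAt
      · intro u hu
        refine hVW (hball ?_)
        rw [mem_ball, Real.dist_eq, abs_of_nonneg (by linarith [hu.1])]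
        have := hu.2
        linarith
      · exact fun u hu => ((hFvd u (le_trans hT hu.1)).continuousAt).continuousWithinAt
      · exact fun u hu => (hFvd u (le_trans hT hu.1)).hasDerivWithinAt
      · exact fun u hu => hYW u (le_trans hT hu.1)
    -- extension by continuity
    have hprefix : ∀ s, 0 ≤ s → (∀ u, 0 ≤ u → u < s → Z u = Y u) → Z s = Y s := by
      intro s hs hpre
      rcases eq_or_lt_of_le hs with heq | hspos
      · rw [← heq]; exact hZ0'
      · have hev : Z =ᶠ[𝓝[<] s] Y := by
          filter_upwards [Ioo_mem_nhdsLT hspos]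
          intro u hu
          exact hpre u (le_of_lt hu.1) hu.2
        have h1 : Tendsto Z (𝓝[<] s) (𝓝 (Z s)) :=
          ((hZd' s hs).continuousAt.tendsto).mono_left nhdsWithin_le_nhds
        have h2 : Tendsto Y (𝓝[<] s) (𝓝 (Y s)) :=
          ((hFvd s hs).continuousAt.tendsto).mono_left nhdsWithin_le_nhds
        exact tendsto_nhds_unique h1 (h2.congr' hev.symm)
    -- the clopen argument
    set A : Set ℝ := {T : ℝ | 0 ≤ T ∧ ∀ s, 0 ≤ s → s ≤ T → Z s = Y s} with hAdef
    have h0A : (0 : ℝ) ∈ A :=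
      ⟨le_rfl, fun s hs hs' => by rw [le_antisymm hs' hs]; exact hZ0'⟩
    have hAall : ∀ t, 0 ≤ t → t ∈ A := by
      intro t ht
      by_contra htA
      have hAlt : ∀ T ∈ A, T < t := by
        intro T hTA
        by_contra hTt
        push_neg at hTt
        exact htA ⟨ht, fun s hs hst => hTA.2 s hs (le_trans hst hTt)⟩
      have hbdd : BddAbove A := ⟨t, fun T hT => le_of_lt (hAlt T hT)⟩
      have hτ0 : 0 ≤ sSup A := le_csSup hbdd h0A
      have hτA : sSup A ∈ A := by
        refine ⟨hτ0, fun s hs hsτ => ?_⟩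
        rcases lt_or_eq_of_le hsτ with hlt | heq
        · obtain ⟨T, hTA, hsT⟩ := exists_lt_of_lt_csSup ⟨0, h0A⟩ hlt
          exact hTA.2 s hs (le_of_lt hsT)
        · refine hprefix s hs fun u hu hus => ?_
          obtain ⟨T, hTA, hT⟩ := exists_lt_of_lt_csSup ⟨0, h0A⟩ (by rw [← heq]; exact hus)
          exact hTA.2 u hu (le_of_lt hT)
      obtain ⟨ε, hε, hEq⟩ := hstep (sSup A) hτ0 (hτA.2 _ hτ0 le_rfl)
      have hmemA : sSup A + ε ∈ A := by
        refine ⟨by linarith, fun s hs hsτε => ?_⟩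
        rcases le_total s (sSup A) with h | h
        · exact hτA.2 s hs h
        · exact hEq ⟨h, hsτε⟩
      have := le_csSup hbdd hmemA
      linarith
    intro t ht i hi
    have hZY := (hAall t ht).2 t ht le_rfl
    have hcomp := congrFun hZY (⟨i, by omega⟩ : Fin (p.d + 1))
    show z t i = p.emb (Y t) i
    rw [hyY t i hi]
    exact hcomp
  · -- nonnegativity
    intro t ht i hi
    show 0 ≤ p.emb (Y t) i
    rw [hyY t i hi]
    exact hnn t ht _
  · -- derivative of the total mass
    intro t ht
    have hDer : HasDerivAt (fun s => ∑ i, Y s i) (∑ i, p.Gv M (Y t) i) t :=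
      HasDerivAt.fun_sum fun i _ => (hasDerivAt_pi.1 (hYd t ht)) i
    have hval := p.Gv_sum hp M (Y t)
    rw [hclV t ht] at hval
    constructor
    · have hfun : (fun s => ∑ i ∈ Finset.range (p.d + 1), p.emb (Y s) i)
        = fun s => ∑ i, Y s i := funext hrange
      rw [hfun, ← hval]
      exact hDer
    · rw [← hval]
      exact p.Gv_sum_nonpos hp M (Y t)
  · -- monotonicity of the total mass
    intro s t hs hst
    rw [hrange s, hrange t]
    exact hanti (mem_Ici.2 hs) (mem_Ici.2 (le_trans hs hst)) hst
  · -- boundedness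
    intro i hi
    refine ⟨M0, fun t ht => ?_⟩
    show p.emb (Y t) i ≤ M0
    rw [hyY t i hi]
    have h1 : Y t ⟨i, by omega⟩ ≤ ∑ j, Y t j :=
      Finset.single_le_sum (f := fun j => Y t j) (fun j _ => hnn t ht j) (Finset.mem_univ _)
    linarith [hsumle t ht]

end Stmt0


/-- existence, uniqueness (for `t ≥ 0`), nonnegativity, decay of the
total population and global boundedness for the nonlinear compartmental ODE model. -/
theorem stmt0
    (d : ℕ) (hd : 1 ≤ d)
    (f0 g0 K10 K20 : ℝ) (f g K1 K2 a b w1 w2 : ℕ → ℝ)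
    (hf0 : 0 ≤ f0) (hg0 : 0 ≤ g0) (hK10 : 0 ≤ K10) (hK20 : 0 ≤ K20)
    (hf : ∀ i, 1 ≤ i → i ≤ d → 0 ≤ f i) (hfd : f d = 0)
    (hg : ∀ i, 1 ≤ i → i ≤ d → 0 ≤ g i)
    (hK1 : ∀ i, 1 ≤ i → i ≤ d → 0 ≤ K1 i)
    (hK2 : ∀ i, 1 ≤ i → i ≤ d → 0 ≤ K2 i)
    (ha : ∀ j, 1 ≤ j → j ≤ d → a j ∈ Set.Icc (0 : ℝ) 1)
    (hb : ∀ j, 1 ≤ j → j ≤ d → b j ∈ Set.Icc (0 : ℝ) 1)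
    (hw1 : ∀ j, 1 ≤ j → j ≤ d → w1 j ∈ Set.Icc (0 : ℝ) 1)
    (hw2 : ∀ j, 1 ≤ j → j ≤ d → w2 j ∈ Set.Icc (0 : ℝ) 1)
    (yin : ℕ → ℝ) (hyin : ∀ i, i ≤ d → 0 ≤ yin i) :
    ∃ y : ℝ → ℕ → ℝ,
      -- initial condition
      (∀ i, i ≤ d → y 0 i = yin i) ∧
      -- `y` solves the ODE system for all `t ≥ 0`
      (∀ t, 0 ≤ t → ∀ i, i ≤ d →
        HasDerivAt (fun s => y s i)
          (rhsODE d f0 g0 K10 K20 f g K1 K2 a b w1 w2 (y t) i) t) ∧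
      -- uniqueness: any other solution coincides with `y` for `t ≥ 0`
      (∀ z : ℝ → ℕ → ℝ,
        (∀ i, i ≤ d → z 0 i = yin i) →
        (∀ t, 0 ≤ t → ∀ i, i ≤ d →
          HasDerivAt (fun s => z s i)
            (rhsODE d f0 g0 K10 K20 f g K1 K2 a b w1 w2 (z t) i) t) →
        ∀ t, 0 ≤ t → ∀ i, i ≤ d → z t i = y t i) ∧
      -- nonnegativity of all components
      (∀ t, 0 ≤ t → ∀ i, i ≤ d → 0 ≤ y t i) ∧
      -- the total population is differentiable with the stated nonpositive derivative
      (∀ t, 0 ≤ t →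
        HasDerivAt (fun s => ∑ i ∈ Finset.range (d + 1), y s i)
          (-(muGen d g0 K20 b (y t) * y t 0)
            - ∑ i ∈ Finset.Icc 1 d, muGen d (g i) (K2 i) w2 (y t) * y t i) t ∧
        (-(muGen d g0 K20 b (y t) * y t 0)
            - ∑ i ∈ Finset.Icc 1 d, muGen d (g i) (K2 i) w2 (y t) * y t i) ≤ 0) ∧
      -- hence the total population `t ↦ ∑ yᵢ(t)` is nonincreasing on `[0,∞)`
      (∀ s t, 0 ≤ s → s ≤ t →
        ∑ i ∈ Finset.range (d + 1), y t i ≤ ∑ i ∈ Finset.range (d + 1), y s i) ∧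
      -- and every component is globally bounded
      (∀ i, i ≤ d → ∃ C : ℝ, ∀ t, 0 ≤ t → y t i ≤ C) := by
  exact Stmt0.main ⟨d, f0, g0, K10, K20, f, g, K1, K2, a, b, w1, w2⟩
    ⟨hd, hf0, hg0, hK10, hK20, hf, hfd, hg, hK1, hK2, ha, hb, hw1, hw2⟩ yin hyin
end

section
/- (Proposition 1) Assume K_{1,i} = K_{2,i} = 0 for all i ∈ {0,…,d} and f_i + g_i > 0 for all i ∈ {1,…,d}. For each ε > 0, let x^ε = (x_0^ε,…,x_d^ε) be the solution of the rescaled linear system dx_0/dt = -(f_0+g_0) x_0, ε dx_i/dt = f_{i-1} x_{i-1} - (f_i+g_i) x_i (i = 1,…,d, with f_d = 0), with fixed initial data x_0^{in} > 0, x_i^{in} ≥ 0. Then for every η > 0, lim_{ε→0} sup_{t > η} max_{i ∈ {1,…,d}} | x_i^ε(t) - x̄_i(t) | = 0, where x̄_i(t) = (Π_{j=0}^{i-1} f_j/(f_{j+1}+g_{j+1})) x_0^{in} exp(-(f_0+g_0) t). -/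
set_option autoImplicit false
set_option maxHeartbeats 1000000

open scoped BigOperators

open Set Real

private lemma decay_one_side {e r : ℝ → ℝ} {a b k c : ℝ} (hk : 0 < k) (hab : a ≤ b)
    (hd : ∀ t ∈ Set.Icc a b, HasDerivAt e (-k * e t + r t) t)
    (hr : ∀ t ∈ Set.Icc a b, |r t| ≤ c) :
    e b ≤ |e a| * Real.exp (-k * (b - a)) + c / k := by
  have hc : 0 ≤ c := le_trans (abs_nonneg _) (hr a ⟨le_rfl, hab⟩)
  set w : ℝ → ℝ := fun t => (e t - c / k) * Real.exp (k * t) with hw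
  have hwderiv : ∀ t ∈ Set.Icc a b, HasDerivAt w ((r t - c) * Real.exp (k * t)) t := by
    intro t ht
    have h1 : HasDerivAt (fun s : ℝ => Real.exp (k * s)) (Real.exp (k * t) * k) t := by
      simpa using ((hasDerivAt_id' t).const_mul k).exp
    have h2 := ((hd t ht).sub_const (c / k)).mul h1
    refine h2.congr_deriv ?_
    field_simp
    ring
  have hanti : AntitoneOn w (Set.Icc a b) := by
    apply antitoneOn_of_deriv_nonpos (convex_Icc a b)
    · exact fun t ht => (hwderiv t ht).continuousAt.continuousWithinAt
    · rw [interior_Icc]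
      exact fun t ht => (hwderiv t (Ioo_subset_Icc_self ht)).differentiableAt.differentiableWithinAt
    · rw [interior_Icc]
      intro t ht
      rw [(hwderiv t (Ioo_subset_Icc_self ht)).deriv]
      have := hr t (Ioo_subset_Icc_self ht)
      have h3 : r t - c ≤ 0 := by have := (abs_le.mp this).2; linarith
      exact mul_nonpos_of_nonpos_of_nonneg h3 (Real.exp_pos _).le
  have hwba := hanti ⟨le_rfl, hab⟩ ⟨hab, le_rfl⟩ hab
  -- (e b - c/k) * exp (k*b) ≤ (e a - c/k) * exp (k*a)
  have hEb : (0:ℝ) < Real.exp (k * b) := Real.exp_pos _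
  have hEa : (0:ℝ) < Real.exp (k * a) := Real.exp_pos _
  have hexp : Real.exp (k * a) = Real.exp (-k * (b - a)) * Real.exp (k * b) := by
    rw [← Real.exp_add]; ring_nf
  have hE1 : Real.exp (-k * (b - a)) ≤ 1 := by
    apply Real.exp_le_one_iff.mpr
    nlinarith
  have hEpos : (0:ℝ) < Real.exp (-k * (b - a)) := Real.exp_pos _
  have hck : 0 ≤ c / k := div_nonneg hc hk.le
  have hea : e a - c / k ≤ |e a| := by
    have := le_abs_self (e a); linarith
  -- from hwba : (e b - c/k) * exp(k b) ≤ (e a - c/k) * exp(k a)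
  have key : (e b - c / k) * Real.exp (k * b) ≤ |e a| * Real.exp (-k * (b - a)) * Real.exp (k * b) := by
    calc (e b - c / k) * Real.exp (k * b) ≤ (e a - c / k) * Real.exp (k * a) := hwba
    _ ≤ |e a| * Real.exp (k * a) := mul_le_mul_of_nonneg_right hea hEa.le
    _ = |e a| * Real.exp (-k * (b - a)) * Real.exp (k * b) := by rw [hexp]; ring
  have := (mul_le_mul_iff_of_pos_right hEb).mp key
  linarith

lemma decay_aux {e r : ℝ → ℝ} {a b k c : ℝ} (hk : 0 < k) (hab : a ≤ b)
    (hd : ∀ t ∈ Set.Icc a b, HasDerivAt e (-k * e t + r t) t)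
    (hr : ∀ t ∈ Set.Icc a b, |r t| ≤ c) :
    |e b| ≤ |e a| * Real.exp (-k * (b - a)) + c / k := by
  have h1 := decay_one_side hk hab hd hr
  have h2 : -(e b) ≤ |(-(e a))| * Real.exp (-k * (b - a)) + c / k := by
    apply decay_one_side hk hab (e := fun t => -e t) (r := fun t => -r t)
    · intro t ht
      have := (hd t ht).neg
      refine this.congr_deriv ?_
      ring
    · intro t ht
      rw [abs_neg]; exact hr t ht
  rw [abs_neg] at h2
  rw [abs_le]
  constructor <;> linarith

lemma slow_closed {L c0 : ℝ} (hL : 0 ≤ L) {y : ℝ → ℝ} (h0 : y 0 = c0)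
    (hder : ∀ t, 0 ≤ t → HasDerivAt y (-L * y t) t) :
    ∀ t, 0 ≤ t → y t = c0 * Real.exp (-L * t) := by
  intro t ht
  set φ : ℝ → ℝ := fun s => y s - c0 * Real.exp (-L * s) with hφ
  have hφd : ∀ s, 0 ≤ s → HasDerivAt φ (-L * φ s) s := by
    intro s hs
    have h1 : HasDerivAt (fun u : ℝ => c0 * Real.exp (-L * u)) (c0 * (Real.exp (-L * s) * -L)) s := by
      have := (((Real.hasDerivAt_exp (-L * s)).comp s ((hasDerivAt_id s).const_mul (-L)))).const_mul c0
      simp only [Function.comp] at this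
      refine this.congr_deriv ?_
      ring
    have h2 := (hder s hs).sub h1
    refine h2.congr_deriv ?_
    simp only [hφ]
    ring
  have key := norm_le_gronwallBound_of_norm_deriv_right_le (f := φ) (f' := fun s => -L * φ s)
    (δ := 0) (K := L) (ε := 0) (a := 0) (b := t)
    (fun s hs => (hφd s hs.1).continuousAt.continuousWithinAt)
    (fun s hs => (hφd s hs.1).hasDerivWithinAt)
    (by simp [hφ, h0])
    (by
      intro s hs
      simp only [Real.norm_eq_abs, abs_mul, abs_neg, abs_of_nonneg hL, add_zero]
      exact le_rfl)
  have := key t ⟨ht, le_rfl⟩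
  rw [gronwallBound_ε0_δ0, Real.norm_eq_abs] at this
  have : φ t = 0 := abs_eq_zero.mp (le_antisymm this (abs_nonneg _))
  simpa [hφ, sub_eq_zero] using this

/-- Proposition 1: in the linear case, the fast components of the rescaled
system converge, uniformly on `{t > η}` for every `η > 0`, to the quasi-steady-state
limit `x̄ᵢ(t) = (∏_{j=0}^{i-1} fⱼ/(f_{j+1}+g_{j+1})) x₀ⁱⁿ e^{-(f₀+g₀)t}` as `ε → 0`. -/
theorem stmt7
    (d : ℕ) (hd : 1 ≤ d) (f g : ℕ → ℝ)
    (hf : ∀ j, j ≤ d → 0 ≤ f j) (hfd : f d = 0)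
    (hg : ∀ j, j ≤ d → 0 ≤ g j)
    (hfg : ∀ i, 1 ≤ i → i ≤ d → 0 < f i + g i)
    (x0in : ℝ) (hx0in : 0 < x0in) (xin : ℕ → ℝ) (hxin : ∀ i, 1 ≤ i → i ≤ d → 0 ≤ xin i)
    -- for each ε > 0, `x ε` is the solution of the rescaled linear system
    (x : ℝ → ℝ → ℕ → ℝ)
    (hinit0 : ∀ ε : ℝ, 0 < ε → x ε 0 0 = x0in)
    (hinit : ∀ ε : ℝ, 0 < ε → ∀ i, 1 ≤ i → i ≤ d → x ε 0 i = xin i)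
    (hslow : ∀ ε : ℝ, 0 < ε → ∀ t, 0 ≤ t →
      HasDerivAt (fun s => x ε s 0) (-(f 0 + g 0) * x ε t 0) t)
    (hfast : ∀ ε : ℝ, 0 < ε → ∀ t, 0 ≤ t → ∀ i, 1 ≤ i → i ≤ d →
      HasDerivAt (fun s => x ε s i)
        ((1 / ε) * (f (i - 1) * x ε t (i - 1) - (f i + g i) * x ε t i)) t) :
    -- conclusion: lim_{ε→0} sup_{t>η} max_{1≤i≤d} |xᵢ^ε(t) - x̄ᵢ(t)| = 0
    ∀ η : ℝ, 0 < η → ∀ δ : ℝ, 0 < δ → ∃ ε0 : ℝ, 0 < ε0 ∧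
      ∀ ε : ℝ, 0 < ε → ε < ε0 → ∀ t : ℝ, η < t → ∀ i, 1 ≤ i → i ≤ d →
        |x ε t i - (∏ j ∈ Finset.range i, f j / (f (j + 1) + g (j + 1)))
            * (x0in * Real.exp (-(f 0 + g 0) * t))| < δ := by
  set L := f 0 + g 0 with hLdef
  have hL0 : 0 ≤ L := add_nonneg (hf 0 (Nat.zero_le d)) (hg 0 (Nat.zero_le d))
  set P : ℕ → ℝ := fun i => ∏ j ∈ Finset.range i, f j / (f (j + 1) + g (j + 1)) with hPdef
  set xb : ℕ → ℝ → ℝ := fun i t => P i * (x0in * Real.exp (-L * t)) with hxbdef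
  -- closed form for the slow variable
  have hx0 : ∀ ε, 0 < ε → ∀ t, 0 ≤ t → x ε t 0 = x0in * Real.exp (-L * t) := by
    intro ε hε
    exact slow_closed hL0 (hinit0 ε hε) (fun t ht => hslow ε hε t ht)
  -- nonnegativity of the product
  have hP0 : ∀ i, i ≤ d → 0 ≤ P i := by
    intro i hi
    apply Finset.prod_nonneg
    intro j hj
    have hj' := Finset.mem_range.mp hj
    exact div_nonneg (hf j (by omega)) (hfg (j + 1) (by omega) (by omega)).le
  -- bound on xb
  have hxbb : ∀ i, i ≤ d → ∀ t, 0 ≤ t → |xb i t| ≤ P i * x0in := by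
    intro i hi t ht
    have h1 : 0 ≤ P i := hP0 i hi
    have h2 : Real.exp (-L * t) ≤ 1 := Real.exp_le_one_iff.mpr (by nlinarith)
    have h3 : 0 < Real.exp (-L * t) := Real.exp_pos _
    rw [hxbdef]
    simp only []
    rw [abs_of_nonneg (by positivity)]
    have h4 : P i * (x0in * Real.exp (-L * t)) = P i * x0in * Real.exp (-L * t) := by ring
    rw [h4]
    exact mul_le_of_le_one_right (by positivity) h2
  -- derivative of xb
  have hxbd : ∀ (i : ℕ) (t : ℝ), HasDerivAt (fun s => xb i s) (-L * xb i t) t := by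
    intro i t
    have h1 : HasDerivAt (fun s : ℝ => Real.exp (-L * s)) (Real.exp (-L * t) * -L) t := by
      have := ((Real.hasDerivAt_exp (-L * t)).comp t ((hasDerivAt_id t).const_mul (-L)))
      simp only [Function.comp_def] at this
      exact this.congr_deriv (by ring)
    have h2 := (h1.const_mul x0in).const_mul (P i)
    refine h2.congr_deriv ?_
    simp only [hxbdef]
    ring
  -- main induction
  have key : ∀ i : ℕ, i ≤ d →
      (∃ M, 0 ≤ M ∧ ∀ ε, 0 < ε → ∀ t, 0 ≤ t → |x ε t i| ≤ M) ∧
      (∀ η' δ' : ℝ, 0 < η' → 0 < δ' → ∃ ε0, 0 < ε0 ∧ ∀ ε, 0 < ε → ε < ε0 → ∀ t, η' ≤ t →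
        |x ε t i - xb i t| < δ') := by
    intro i
    induction i with
    | zero =>
      intro _
      constructor
      · refine ⟨x0in, hx0in.le, ?_⟩
        intro ε hε t ht
        rw [hx0 ε hε t ht]
        have h2 : Real.exp (-L * t) ≤ 1 := Real.exp_le_one_iff.mpr (by nlinarith)
        have h3 : 0 < Real.exp (-L * t) := Real.exp_pos _
        rw [abs_of_nonneg (by positivity)]
        exact mul_le_of_le_one_right hx0in.le h2
      · intro η' δ' hη' hδ'
        refine ⟨1, one_pos, ?_⟩
        intro ε hε _ t hηt
        have ht : 0 ≤ t := le_trans hη'.le hηt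
        rw [hx0 ε hε t ht]
        have : xb 0 t = x0in * Real.exp (-L * t) := by
          simp [hxbdef, hPdef]
        rw [this]
        simpa using hδ'
    | succ i IH =>
      intro hi1
      have hi : i ≤ d := by omega
      obtain ⟨⟨M, hM0, hMb⟩, hconv⟩ := IH hi
      set μ := f (i + 1) + g (i + 1) with hμdef
      have hμ : 0 < μ := hfg (i + 1) (by omega) hi1
      -- derivative in convenient form
      have hder : ∀ ε, 0 < ε → ∀ s, 0 ≤ s →
          HasDerivAt (fun u => x ε u (i + 1))
            (-(μ / ε) * x ε s (i + 1) + (1 / ε) * (f i * x ε s i)) s := by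
        intro ε hε s hs
        have h := hfast ε hε s hs (i + 1) (by omega) hi1
        simp only [Nat.add_sub_cancel] at h
        convert h using 1
        field_simp
        ring
      -- uniform bound
      set M' := |xin (i + 1)| + f i * M / μ with hM'def
      have hM'0 : 0 ≤ M' := by
        have := hf i hi
        positivity
      have hbound : ∀ ε, 0 < ε → ∀ t, 0 ≤ t → |x ε t (i + 1)| ≤ M' := by
        intro ε hε t ht
        have hk : 0 < μ / ε := div_pos hμ hε
        have hdec : |x ε t (i + 1)| ≤ |x ε 0 (i + 1)| * Real.exp (-(μ / ε) * (t - 0))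
            + ((1 / ε) * (f i * M)) / (μ / ε) := decay_aux (e := fun u => x ε u (i + 1))
          (r := fun u => (1 / ε) * (f i * x ε u i)) (a := 0) (b := t)
          (k := μ / ε) (c := (1 / ε) * (f i * M)) hk ht
          (fun s hs => hder ε hε s hs.1)
          (by
            intro s hs
            rw [abs_mul, abs_mul]
            have h1 : |x ε s i| ≤ M := hMb ε hε s hs.1
            have h2 : 0 ≤ f i := hf i hi
            have h3 : (0:ℝ) ≤ 1 / ε := by positivity
            rw [abs_of_nonneg h3, abs_of_nonneg h2]
            exact mul_le_mul_of_nonneg_left (mul_le_mul_of_nonneg_left h1 h2) h3)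
        have hE1 : Real.exp (-(μ / ε) * (t - 0)) ≤ 1 :=
          Real.exp_le_one_iff.mpr (by nlinarith)
        have hEpos : (0:ℝ) < Real.exp (-(μ / ε) * (t - 0)) := Real.exp_pos _
        have hinit' : x ε 0 (i + 1) = xin (i + 1) := hinit ε hε (i + 1) (by omega) hi1
        have hck : ((1 / ε) * (f i * M)) / (μ / ε) = f i * M / μ := by
          field_simp
        rw [hinit', hck] at hdec
        have habs : 0 ≤ |xin (i + 1)| := abs_nonneg _
        calc |x ε t (i + 1)| ≤ |xin (i + 1)| * Real.exp (-(μ / ε) * (t - 0)) + f i * M / μ := hdec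
          _ ≤ M' := by rw [hM'def]; nlinarith
      constructor
      · exact ⟨M', hM'0, hbound⟩
      -- convergence
      intro η δ hη hδ
      set C := P (i + 1) * x0in with hCdef
      have hC0 : 0 ≤ C := mul_nonneg (hP0 _ hi1) hx0in.le
      set δ1 := μ * δ / (3 * (f i + 1)) with hδ1def
      have hfi : 0 ≤ f i := hf i hi
      have hδ1 : 0 < δ1 := by positivity
      obtain ⟨ε1, hε1, hnear⟩ := hconv (η / 2) δ1 (half_pos hη) hδ1
      set ε2 := μ * δ / (3 * (L * C + 1)) with hε2def
      have hLC : 0 ≤ L * C := mul_nonneg hL0 hC0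
      have hε2 : 0 < ε2 := by positivity
      set ε3 := μ * η * δ / (6 * (M' + C) + 1) with hε3def
      have hε3 : 0 < ε3 := by positivity
      refine ⟨min ε1 (min ε2 ε3), by positivity, ?_⟩
      intro ε hε hεlt t hηt
      have hεε1 : ε < ε1 := lt_of_lt_of_le hεlt (min_le_left _ _)
      have hεε2 : ε < ε2 := lt_of_lt_of_le hεlt (le_trans (min_le_right _ _) (min_le_left _ _))
      have hεε3 : ε < ε3 := lt_of_lt_of_le hεlt (le_trans (min_le_right _ _) (min_le_right _ _))
      have hk : 0 < μ / ε := div_pos hμ hε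
      have hab : η / 2 ≤ t := le_trans (by linarith) hηt
      -- the key algebraic identity
      have hid : ∀ s : ℝ, f i * xb i s = μ * xb (i + 1) s := by
        intro s
        have hPs : P (i + 1) = P i * (f i / μ) := by
          rw [hPdef]
          simp only []
          rw [Finset.prod_range_succ]
        rw [hxbdef]
        simp only []
        rw [hPs]
        field_simp
      -- derivative of the error
      have hederiv : ∀ s ∈ Set.Icc (η / 2) t,
          HasDerivAt (fun u => x ε u (i + 1) - xb (i + 1) u)
            (-(μ / ε) * (x ε s (i + 1) - xb (i + 1) s)
              + ((1 / ε) * (f i * (x ε s i - xb i s)) + L * xb (i + 1) s)) s := by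
        intro s hs
        have hs0 : 0 ≤ s := le_trans (by linarith) hs.1
        have h1 := (hder ε hε s hs0).sub (hxbd (i + 1) s)
        refine h1.congr_deriv ?_
        linear_combination (1 / ε) * hid s
      have hdec : |x ε t (i + 1) - xb (i + 1) t|
          ≤ |x ε (η / 2) (i + 1) - xb (i + 1) (η / 2)| * Real.exp (-(μ / ε) * (t - η / 2))
            + ((1 / ε) * (f i * δ1) + L * C) / (μ / ε) :=
        decay_aux (e := fun u => x ε u (i + 1) - xb (i + 1) u)
        (r := fun u => (1 / ε) * (f i * (x ε u i - xb i u)) + L * xb (i + 1) u)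
        (a := η / 2) (b := t) (k := μ / ε)
        (c := (1 / ε) * (f i * δ1) + L * C) hk hab hederiv
        (by
          intro s hs
          have hs0 : 0 ≤ s := le_trans (by linarith) hs.1
          have h1 : |x ε s i - xb i s| ≤ δ1 := (hnear ε hε hεε1 s hs.1).le
          have h2 : |xb (i + 1) s| ≤ C := hxbb (i + 1) hi1 s hs0
          have h3 : (0:ℝ) ≤ 1 / ε := by positivity
          calc |(1 / ε) * (f i * (x ε s i - xb i s)) + L * xb (i + 1) s|
              ≤ |(1 / ε) * (f i * (x ε s i - xb i s))| + |L * xb (i + 1) s| := abs_add_le _ _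
            _ ≤ (1 / ε) * (f i * δ1) + L * C := by
                rw [abs_mul, abs_mul, abs_mul, abs_of_nonneg h3, abs_of_nonneg hfi,
                  abs_of_nonneg hL0]
                exact add_le_add
                  (mul_le_mul_of_nonneg_left (mul_le_mul_of_nonneg_left h1 hfi) h3)
                  (mul_le_mul_of_nonneg_left h2 hL0))
      -- now estimate the three terms
      have hE0 : |x ε (η / 2) (i + 1) - xb (i + 1) (η / 2)| ≤ M' + C := by
        have h1 := hbound ε hε (η / 2) (by linarith)
        have h2 := hxbb (i + 1) hi1 (η / 2) (by linarith)
        calc |x ε (η / 2) (i + 1) - xb (i + 1) (η / 2)|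
            ≤ |x ε (η / 2) (i + 1)| + |xb (i + 1) (η / 2)| := abs_sub _ _
          _ ≤ M' + C := add_le_add h1 h2
      have hexpb : Real.exp (-(μ / ε) * (t - η / 2)) ≤ 2 * ε / (μ * η) := by
        have hy : 0 < (μ / ε) * (η / 2) := by positivity
        have h1 : Real.exp (-(μ / ε) * (t - η / 2)) ≤ Real.exp (-(μ / ε) * (η / 2)) := by
          apply Real.exp_le_exp.mpr
          nlinarith
        have h2 := Real.add_one_le_exp ((μ / ε) * (η / 2))
        have h3 : Real.exp (-(μ / ε) * (η / 2)) = (Real.exp ((μ / ε) * (η / 2)))⁻¹ := by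
          rw [← Real.exp_neg]; ring_nf
        have h4 : (Real.exp ((μ / ε) * (η / 2)))⁻¹ ≤ ((μ / ε) * (η / 2))⁻¹ := by
          apply inv_anti₀ hy
          linarith
        have h5 : ((μ / ε) * (η / 2))⁻¹ = 2 * ε / (μ * η) := by
          field_simp
        rw [h3] at h1
        rw [h5] at h4
        linarith
      have hEpos : (0:ℝ) < Real.exp (-(μ / ε) * (t - η / 2)) := Real.exp_pos _
      have hterm1 : (M' + C) * Real.exp (-(μ / ε) * (t - η / 2)) < δ / 3 := by
        have h1 : (M' + C) * Real.exp (-(μ / ε) * (t - η / 2)) ≤ (M' + C) * (2 * ε / (μ * η)) :=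
          mul_le_mul_of_nonneg_left hexpb (by linarith)
        have h2 : ε * (6 * (M' + C) + 1) < μ * η * δ := by
          rw [hε3def] at hεε3
          exact (lt_div_iff₀ (by positivity)).mp hεε3
        have h3 : (M' + C) * (2 * ε / (μ * η)) = (2 * (M' + C) * ε) / (μ * η) := by ring
        rw [h3] at h1
        have h4 : (2 * (M' + C) * ε) / (μ * η) < δ / 3 := by
          rw [div_lt_div_iff₀ (by positivity) (by norm_num : (0:ℝ) < 3)]
          nlinarith
        linarith
      have hck : ((1 / ε) * (f i * δ1) + L * C) / (μ / ε) = f i * δ1 / μ + ε * L * C / μ := by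
        field_simp
      have hterm2 : f i * δ1 / μ < δ / 3 := by
        have h1 : f i * δ1 / μ = f i * δ / (3 * (f i + 1)) := by
          rw [hδ1def]; field_simp
        rw [h1, div_lt_div_iff₀ (by positivity) (by norm_num : (0:ℝ) < 3)]
        nlinarith
      have hterm3 : ε * L * C / μ < δ / 3 := by
        have h2 : ε * (3 * (L * C + 1)) < μ * δ := by
          rw [hε2def] at hεε2
          exact (lt_div_iff₀ (by positivity)).mp hεε2
        rw [div_lt_div_iff₀ hμ (by norm_num : (0:ℝ) < 3)]
        nlinarith
      have hA : |x ε (η / 2) (i + 1) - xb (i + 1) (η / 2)| * Real.exp (-(μ / ε) * (t - η / 2))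
          ≤ (M' + C) * Real.exp (-(μ / ε) * (t - η / 2)) :=
        mul_le_mul_of_nonneg_right hE0 hEpos.le
      rw [hck] at hdec
      linarith
  -- final assembly
  intro η hη δ hδ
  have key2 : ∀ i : ℕ, ∃ e0 : ℝ, 0 < e0 ∧ (1 ≤ i → i ≤ d →
      ∀ ε, 0 < ε → ε < e0 → ∀ t, η ≤ t → |x ε t i - xb i t| < δ) := by
    intro i
    by_cases hid : 1 ≤ i ∧ i ≤ d
    · obtain ⟨e0, he0, h⟩ := (key i hid.2).2 η δ hη hδ
      exact ⟨e0, he0, fun _ _ => h⟩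
    · exact ⟨1, one_pos, fun h1 h2 => absurd ⟨h1, h2⟩ hid⟩
  choose E hE1 hE2 using key2
  have hne : (Finset.range (d + 1)).Nonempty := ⟨0, by simp⟩
  refine ⟨(Finset.range (d + 1)).inf' hne E, ?_, ?_⟩
  · rw [Finset.lt_inf'_iff]
    exact fun i _ => hE1 i
  · intro ε hε hεlt t hηt i h1 h2
    have hEi : ε < E i := lt_of_lt_of_le hεlt
      (Finset.inf'_le E (Finset.mem_range.mpr (by omega)))
    have := hE2 i h1 h2 ε hε hEi t hηt.le
    simp only [hxbdef, hPdef, hLdef] at this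
    exact this
end

section
/- Assume f ∈ C^1 with f > 0 on [0,1], g continuous, f_0, g_0 ≥ 0, ρ_0^{in} > 0, and ε > 0. Let X(0;t,x) denote the backward characteristic through (t,x) of dX/ds = f(X)/ε, and let ρ^{in} be a C^1 initial density. Then the pair ρ_0^ε(t) = ρ_0^{in} exp(-(f_0+g_0)t) together with ρ^ε(t,x) defined by ρ^ε(t,x) = exp( -∫_{X(0;t,x)}^x (g(y)+f'(y))/f(y) dy ) ρ^{in}(X(0;t,x)) when t ≤ ∫_0^x ε/f(y) dy, and ρ^ε(t,x) = (f_0/f(0)) ρ_0^{in} exp( -(f_0+g_0)( t - ∫_0^x ε/f(y) dy ) ) exp( -∫_0^x (g(y)+f'(y))/f(y) dy ) when t > ∫_0^x ε/f(y) dy, is a solution of the rescaled linear system d ρ_0/dt = -(f_0+g_0) ρ_0, ε ∂_t ρ(t,x) = -∂_x( f(x) ρ(t,x) ) - g(x) ρ(t,x) for x ∈ (0,1) away from the characteristic t = ∫_0^x ε/f(y) dy, with boundary condition lim_{x→0} f(x) ρ(t,x) = f_0 ρ_0(t) and initial condition (ρ_0^{in}, ρ^{in}). -/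
set_option autoImplicit false

open MeasureTheory Filter

lemma cons_aux (a' b' : ℝ) (T Y : ℝ → ℝ) (s : ℝ) (hs : 0 ≤ s)
    (hYcont : Continuous Y)
    (hTY : ∀ τ : ℝ, Y τ ∈ Set.Icc a' b' → HasDerivAt (fun u => T (Y u)) 1 τ)
    (hTmono : StrictMonoOn T (Set.Icc a' b'))
    (hYs : Y s ∈ Set.Icc a' b') (hYsb : Y s < b')
    (hlow : T a' ≤ T (Y s) - s) :
    ∀ σ ∈ Set.Icc 0 s, Y σ ∈ Set.Icc a' b' ∧ T (Y σ) = T (Y s) + σ - s := by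
  have ha'b' : a' ≤ b' := le_trans hYs.1 hYs.2
  set A : Set ℝ := {σ | σ ∈ Set.Icc 0 s ∧ ∀ τ ∈ Set.Icc σ s, Y τ ∈ Set.Icc a' b'} with hA
  have hsA : s ∈ A := ⟨⟨hs, le_rfl⟩, fun τ hτ => by
    have : τ = s := le_antisymm hτ.2 hτ.1
    rwa [this]⟩
  have hne : A.Nonempty := ⟨s, hsA⟩
  have hbdd : BddBelow A := ⟨0, fun σ hσ => hσ.1.1⟩
  set m := sInf A with hm
  have hm0 : 0 ≤ m := le_csInf hne fun σ hσ => hσ.1.1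
  have hms : m ≤ s := csInf_le hbdd hsA
  have hIcc : ∀ τ ∈ Set.Icc m s, Y τ ∈ Set.Icc a' b' := by
    intro τ hτ
    rcases eq_or_lt_of_le hτ.1 with h | h
    · rcases eq_or_lt_of_le hms with hms' | hms'
      · rw [← h, hms']; exact hYs
      · have hmemev : ∀ᶠ u in nhdsWithin m (Set.Ioi m), Y u ∈ Set.Icc a' b' := by
          filter_upwards [Ioc_mem_nhdsGT hms'] with u hu
          obtain ⟨σ, hσA, hσu⟩ := exists_lt_of_csInf_lt hne hu.1
          exact hσA.2 u ⟨hσu.le, hu.2⟩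
        have := isClosed_Icc.mem_of_tendsto
          ((hYcont.tendsto m).mono_left nhdsWithin_le_nhds) hmemev
        rwa [← h]
    · obtain ⟨σ, hσA, hσu⟩ := exists_lt_of_csInf_lt hne h
      exact hσA.2 τ ⟨hσu.le, hτ.2⟩
  have hrel : ∀ τ ∈ Set.Icc m s, T (Y τ) = T (Y s) + τ - s := by
    have hconst := constant_of_has_deriv_right_zero (f := fun τ => T (Y τ) - τ) (a := m) (b := s)
      (fun τ hτ => ((hTY τ (hIcc τ hτ)).continuousAt.sub continuousAt_id).continuousWithinAt)
      (fun τ hτ => by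
        have h := (((hTY τ (hIcc τ ⟨hτ.1, hτ.2.le⟩)).sub (hasDerivAt_id τ)).hasDerivWithinAt
          (s := Set.Ici τ))
        rw [sub_self] at h
        exact h)
    intro τ hτ
    have h1 := hconst τ hτ
    have h2 := hconst s ⟨hms, le_rfl⟩
    linarith
  have hm_eq : m = 0 := by
    by_contra hne0
    have hmpos : 0 < m := lt_of_le_of_ne hm0 (Ne.symm hne0)
    have hYm : Y m ∈ Set.Icc a' b' := hIcc m ⟨le_rfl, hms⟩
    have hTm : T (Y m) = T (Y s) + m - s := hrel m ⟨le_rfl, hms⟩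
    have h1 : a' < Y m := by
      rcases eq_or_lt_of_le hYm.1 with h | h
      · exfalso
        have : T (Y m) = T a' := by rw [← h]
        linarith
      · exact h
    have h2 : Y m < b' := by
      rcases eq_or_lt_of_le hYm.2 with h | h
      · exfalso
        have hb : T (Y s) < T b' := hTmono hYs ⟨ha'b', le_rfl⟩ hYsb
        rw [h] at hTm
        linarith
      · exact h
    have hrpos : 0 < min (Y m - a') (b' - Y m) := lt_min (by linarith) (by linarith)
    obtain ⟨δ, hδ, hball⟩ := Metric.continuousAt_iff.mp (hYcont.continuousAt (x := m)) _ hrpos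
    set σ0 := max 0 (m - δ / 2) with hσ0
    have hσ0m : σ0 < m := max_lt hmpos (by linarith)
    have hσ0A : σ0 ∈ A := by
      refine ⟨⟨le_max_left _ _, le_trans hσ0m.le hms⟩, ?_⟩
      intro τ hτ
      rcases le_or_gt m τ with h | h
      · exact hIcc τ ⟨h, hτ.2⟩
      · have hml : m - δ / 2 ≤ τ := le_trans (le_max_right _ _) hτ.1
        have hdist : dist τ m < δ := by
          rw [Real.dist_eq, abs_of_nonpos (by linarith)]
          linarith
        have hb := hball hdist
        rw [Real.dist_eq] at hb
        have habs := abs_lt.mp hb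
        have hmin1 := min_le_left (Y m - a') (b' - Y m)
        have hmin2 := min_le_right (Y m - a') (b' - Y m)
        constructor <;> linarith [habs.1, habs.2]
    exact absurd (csInf_le hbdd hσ0A) (not_le.mpr hσ0m)
  intro σ hσ
  have hσ' : σ ∈ Set.Icc m s := ⟨hm_eq ▸ hσ.1, hσ.2⟩
  exact ⟨hIcc σ hσ', hrel σ hσ'⟩


set_option maxHeartbeats 1000000 in
/-- the pair built by the method of characteristics solves the rescaled
linear ODE–PDE model (away from the characteristic issued from the origin). -/
theorem stmt11
    (f g : ℝ → ℝ) (f0 g0 ρ0in ε : ℝ)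
    (hfC1 : ContDiff ℝ 1 f) (hfpos : ∀ x ∈ Set.Icc (0 : ℝ) 1, 0 < f x)
    (hgcont : Continuous g)
    (hf0 : 0 ≤ f0) (hg0 : 0 ≤ g0) (hρ0in : 0 < ρ0in) (hε : 0 < ε)
    (ρin : ℝ → ℝ) (hρin : ContDiff ℝ 1 ρin)
    -- X s t x is the characteristic through (t,x) of dX/ds = f(X)/ε
    (X : ℝ → ℝ → ℝ → ℝ)
    (hXinit : ∀ t x : ℝ, X t t x = x)
    (hXode : ∀ s t x : ℝ, HasDerivAt (fun σ => X σ t x) (f (X s t x) / ε) s)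
    -- the slow component
    (ρ0 : ℝ → ℝ) (hρ0 : ∀ t, ρ0 t = ρ0in * Real.exp (-(f0 + g0) * t))
    -- the density built by the method of characteristics
    (ρ : ℝ → ℝ → ℝ)
    (hρ : ∀ t x : ℝ, ρ t x =
      if t ≤ ∫ y in (0 : ℝ)..x, ε / f y then
        Real.exp (-∫ y in (X 0 t x)..x, (g y + deriv f y) / f y) * ρin (X 0 t x)
      else
        (f0 / f 0) * ρ0in
          * Real.exp (-(f0 + g0) * (t - ∫ y in (0 : ℝ)..x, ε / f y))
          * Real.exp (-∫ y in (0 : ℝ)..x, (g y + deriv f y) / f y)) :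
    -- initial conditions
    (ρ0 0 = ρ0in ∧ ∀ x ∈ Set.Ioo (0 : ℝ) 1, ρ 0 x = ρin x) ∧
    -- slow equation : dρ₀/dt = -(f₀+g₀) ρ₀
    (∀ t : ℝ, HasDerivAt ρ0 (-(f0 + g0) * ρ0 t) t) ∧
    -- PDE : ε ∂ₜρ = -∂ₓ(f ρ) - g ρ, for x ∈ (0,1), away from the characteristic
    (∀ t : ℝ, 0 ≤ t → ∀ x ∈ Set.Ioo (0 : ℝ) 1,
      t ≠ ∫ y in (0 : ℝ)..x, ε / f y →
      ∃ Dt Dx : ℝ,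
        HasDerivAt (fun s => ρ s x) Dt t ∧
        HasDerivAt (fun y => f y * ρ t y) Dx x ∧
        ε * Dt = -Dx - g x * ρ t x) ∧
    -- boundary condition : lim_{x→0⁺} f(x) ρ(t,x) = f₀ ρ₀(t)
    (∀ t : ℝ, 0 < t →
      Tendsto (fun x => f x * ρ t x) (nhdsWithin 0 (Set.Ioi 0))
        (nhds (f0 * ρ0 t))) := by
  have hcf := hfC1.continuous
  -- extend positivity domain
  obtain ⟨a, ha0, hfa⟩ : ∃ a : ℝ, a < 0 ∧ ∀ y ∈ Set.Icc a 1, 0 < f y := by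
    have h0 : (0:ℝ) < f 0 := hfpos 0 ⟨le_rfl, zero_le_one⟩
    have hev : ∀ᶠ y in nhds (0:ℝ), 0 < f y := hcf.continuousAt.eventually (eventually_gt_nhds h0)
    obtain ⟨δ, hδpos, hδ⟩ := Metric.eventually_nhds_iff.mp hev
    refine ⟨-(δ/2), by linarith, ?_⟩
    intro y hy
    rcases le_or_gt y 0 with h | h
    · refine hδ ?_
      rw [Real.dist_eq, sub_zero, abs_of_nonpos h]
      linarith [hy.1]
    · exact hfpos y ⟨h.le, hy.2⟩
  obtain ⟨b, hb1, hfab⟩ : ∃ b : ℝ, 1 < b ∧ ∀ y ∈ Set.Icc a b, 0 < f y := by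
    have h1 : (0:ℝ) < f 1 := hfpos 1 ⟨zero_le_one, le_rfl⟩
    have hev : ∀ᶠ y in nhds (1:ℝ), 0 < f y := hcf.continuousAt.eventually (eventually_gt_nhds h1)
    obtain ⟨δ, hδpos, hδ⟩ := Metric.eventually_nhds_iff.mp hev
    refine ⟨1 + δ/2, by linarith, ?_⟩
    intro y hy
    rcases le_or_gt y 1 with h | h
    · exact hfa y ⟨hy.1, h⟩
    · refine hδ ?_
      rw [Real.dist_eq, abs_of_nonneg (by linarith)]
      linarith [hy.2]
  set a' : ℝ := a / 2 with ha'def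
  set b' : ℝ := (1 + b) / 2 with hb'def
  have ha' : a < a' := by rw [ha'def]; linarith
  have ha'0 : a' < 0 := by rw [ha'def]; linarith
  have h1b' : 1 < b' := by rw [hb'def]; linarith
  have hb'b : b' < b := by rw [hb'def]; linarith
  have hsub : Set.Icc a' b' ⊆ Set.Icc a b := Set.Icc_subset_Icc ha'.le hb'b.le
  have h0ab : (0:ℝ) ∈ Set.Icc a b := ⟨by linarith, by linarith⟩
  have h0ab' : (0:ℝ) ∈ Set.Icc a' b' := ⟨ha'0.le, by linarith⟩
  have hfne : ∀ y ∈ Set.Icc a b, f y ≠ 0 := fun y hy => (hfab y hy).ne'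
  set T : ℝ → ℝ := fun y => ∫ u in (0:ℝ)..y, ε / f u with hTdef
  set q : ℝ → ℝ := fun y => (g y + deriv f y) / f y with hqdef
  set F : ℝ → ℝ := fun y => ∫ u in (0:ℝ)..y, q u with hFdef
  have hint_cont : ContinuousOn (fun u => ε / f u) (Set.Icc a b) :=
    continuousOn_const.div hcf.continuousOn hfne
  have hq_cont : ContinuousOn q (Set.Icc a b) := by
    rw [hqdef]
    exact ((hgcont.add (hfC1.continuous_deriv le_rfl)).continuousOn).div hcf.continuousOn hfne
  have hInt : ∀ y ∈ Set.Icc a b, ∀ z ∈ Set.Icc a b,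
      IntervalIntegrable (fun u => ε / f u) volume y z := fun y hy z hz =>
    (hint_cont.mono (Set.uIcc_subset_Icc hy hz)).intervalIntegrable
  have hIntq : ∀ y ∈ Set.Icc a b, ∀ z ∈ Set.Icc a b,
      IntervalIntegrable q volume y z := fun y hy z hz =>
    (hq_cont.mono (Set.uIcc_subset_Icc hy hz)).intervalIntegrable
  have hTderiv : ∀ y ∈ Set.Icc a' b', HasDerivAt T (ε / f y) y := by
    intro y hy
    exact intervalIntegral.integral_hasDerivAt_right (hInt 0 h0ab y (hsub hy))
      (ContinuousOn.stronglyMeasurableAtFilter isOpen_Ioo (hint_cont.mono Set.Ioo_subset_Icc_self)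
        y ⟨lt_of_lt_of_le ha' hy.1, lt_of_le_of_lt hy.2 hb'b⟩)
      (ContinuousAt.div continuousAt_const hcf.continuousAt (hfne y (hsub hy)))
  have hFderiv : ∀ y ∈ Set.Icc a' b', HasDerivAt F (q y) y := by
    intro y hy
    exact intervalIntegral.integral_hasDerivAt_right (hIntq 0 h0ab y (hsub hy))
      (ContinuousOn.stronglyMeasurableAtFilter isOpen_Ioo (hq_cont.mono Set.Ioo_subset_Icc_self)
        y ⟨lt_of_lt_of_le ha' hy.1, lt_of_le_of_lt hy.2 hb'b⟩)
      (by
        rw [hqdef]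
        exact ContinuousAt.div (hgcont.continuousAt.add (hfC1.continuous_deriv le_rfl).continuousAt)
          hcf.continuousAt (hfne y (hsub hy)))
  have hT0 : T 0 = 0 := intervalIntegral.integral_same
  have hF0 : F 0 = 0 := intervalIntegral.integral_same
  have hTsub : ∀ y ∈ Set.Icc a b, ∀ z ∈ Set.Icc a b, T z - T y = ∫ u in y..z, ε / f u := by
    intro y hy z hz
    exact intervalIntegral.integral_interval_sub_left (hInt 0 h0ab z hz) (hInt 0 h0ab y hy)
  have hqsub : ∀ z ∈ Set.Icc a b, ∀ x ∈ Set.Icc a b, (∫ u in z..x, q u) = F x - F z := by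
    intro z hz x hx
    exact (intervalIntegral.integral_interval_sub_left (hIntq 0 h0ab x hx) (hIntq 0 h0ab z hz)).symm
  have hTmono : StrictMonoOn T (Set.Icc a' b') := by
    intro y hy z hz hyz
    have hpos : 0 < ∫ u in y..z, ε / f u :=
      intervalIntegral.intervalIntegral_pos_of_pos_on (hInt y (hsub hy) z (hsub hz))
        (fun u hu => div_pos hε (hfab u ⟨le_trans (hsub hy).1 hu.1.le, le_trans hu.2.le (hsub hz).2⟩))
        hyz
    have := hTsub y (hsub hy) z (hsub hz)
    linarith
  obtain ⟨xm, hxm, hM⟩ := isCompact_Icc.exists_isMaxOn ⟨0, h0ab⟩ hcf.continuousOn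
  set M := f xm with hMdef
  have hMpos : 0 < M := hfab xm hxm
  have hgap : ∀ y ∈ Set.Icc a' b', ∀ z ∈ Set.Icc a' b', y ≤ z → ε / M * (z - y) ≤ T z - T y := by
    intro y hy z hz hyz
    rw [hTsub y (hsub hy) z (hsub hz)]
    have h1 : (∫ _u in y..z, ε / M) ≤ ∫ u in y..z, ε / f u := by
      refine intervalIntegral.integral_mono_on hyz intervalIntegrable_const
        (hInt y (hsub hy) z (hsub hz)) (fun u hu => ?_)
      have hu' : u ∈ Set.Icc a b := ⟨le_trans (hsub hy).1 hu.1, le_trans hu.2 (hsub hz).2⟩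
      have hfu : 0 < f u := hfab u hu'
      have hfM : f u ≤ M := hM hu'
      gcongr
    rw [intervalIntegral.integral_const, smul_eq_mul] at h1
    linarith [h1]
  -- continuity of characteristics
  have hYc : ∀ s x' : ℝ, Continuous (fun σ => X σ s x') := by
    intro s x'
    exact continuous_iff_continuousAt.mpr fun σ => (hXode σ s x').continuousAt
  have hchain : ∀ s x' τ : ℝ, X τ s x' ∈ Set.Icc a' b' →
      HasDerivAt (fun u => T (X u s x')) 1 τ := by
    intro s x' τ hmem
    have h1 := (hTderiv _ hmem).comp τ (hXode τ s x')
    have h2 : ε / f (X τ s x') * (f (X τ s x') / ε) = 1 := by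
      rw [div_mul_div_comm, mul_comm]
      exact div_self (mul_ne_zero (hfne _ (hsub hmem)) hε.ne')
    rw [h2] at h1
    exact h1
  have consF : ∀ s x' : ℝ, 0 ≤ s → x' ∈ Set.Icc a' b' → x' < b' → T a' ≤ T x' - s →
      X 0 s x' ∈ Set.Icc a' b' ∧ T (X 0 s x') = T x' - s := by
    intro s x' hs hx' hxb hlow
    have key := cons_aux a' b' T (fun σ => X σ s x') s hs (hYc s x')
      (fun τ => hchain s x' τ) hTmono
      (by simpa [hXinit] using hx') (by simpa [hXinit] using hxb)
      (by simpa [hXinit] using hlow)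
    have h0 := key 0 ⟨le_rfl, hs⟩
    simp only [hXinit] at h0
    exact ⟨h0.1, by linarith [h0.2]⟩
  have consB : ∀ s x' : ℝ, s ≤ 0 → x' ∈ Set.Icc a' b' → a' < x' → T x' - s ≤ T b' →
      X 0 s x' ∈ Set.Icc a' b' ∧ T (X 0 s x') = T x' - s := by
    intro s x' hs hx' hxa hhigh
    have hYc' : Continuous (fun σ : ℝ => -X (-σ) s x') := ((hYc s x').comp continuous_neg).neg
    have hmono' : StrictMonoOn (fun y => -T (-y)) (Set.Icc (-b') (-a')) := by
      intro y hy z hz hyz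
      simp only
      have hy' : -y ∈ Set.Icc a' b' := ⟨by linarith [hy.2], by linarith [hy.1]⟩
      have hz' : -z ∈ Set.Icc a' b' := ⟨by linarith [hz.2], by linarith [hz.1]⟩
      have := hTmono hz' hy' (by linarith)
      linarith
    have hchain' : ∀ τ : ℝ, (fun σ => -X (-σ) s x') τ ∈ Set.Icc (-b') (-a') →
        HasDerivAt (fun u => (fun y => -T (-y)) ((fun σ => -X (-σ) s x') u)) 1 τ := by
      intro τ hmem
      simp only [Set.mem_Icc] at hmem
      have hmem' : X (-τ) s x' ∈ Set.Icc a' b' := ⟨by linarith [hmem.2], by linarith [hmem.1]⟩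
      have h1 := hchain s x' (-τ) hmem'
      have h2 := (h1.comp τ ((hasDerivAt_id τ).neg)).neg
      have h3 : (fun u => (fun y => -T (-y)) ((fun σ => -X (-σ) s x') u))
          = fun u => -((fun u => T (X u s x')) ∘ fun u => -(id u)) u := by
        funext u
        simp [Function.comp]
      rw [h3]
      exact h2.congr_deriv (by norm_num)
    have key := cons_aux (-b') (-a') (fun y => -T (-y)) (fun σ => -X (-σ) s x') (-s)
      (by linarith) hYc' hchain' hmono'
      (by
        simp only [neg_neg, hXinit, Set.mem_Icc]
        exact ⟨neg_le_neg hx'.2, neg_le_neg hx'.1⟩)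
      (by simp only [neg_neg, hXinit]; simpa using hxa)
      (by
        simp only [neg_neg, hXinit]
        linarith)
      0 ⟨le_rfl, by linarith⟩
    simp only [neg_zero, neg_neg, hXinit, Set.mem_Icc] at key
    exact ⟨⟨by linarith [key.1.1, key.1.2], by linarith [key.1.1, key.1.2]⟩, by linarith [key.2]⟩
  refine ⟨⟨?_, ?_⟩, ?_, ?_, ?_⟩
  · rw [hρ0 0]; simp
  · intro x hx
    have hTxnn : (0:ℝ) ≤ T x := by
      rw [hTdef]
      exact intervalIntegral.integral_nonneg hx.1.le
        (fun u hu => le_of_lt (div_pos hε (hfpos u ⟨hu.1, le_trans hu.2 hx.2.le⟩)))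
    rw [hρ 0 x, if_pos hTxnn, hXinit 0 x, intervalIntegral.integral_same]
    simp
  · intro t
    have hfun : ρ0 = fun t => ρ0in * Real.exp (-(f0 + g0) * t) := funext hρ0
    rw [hfun]
    have h1 : HasDerivAt (fun u : ℝ => -(f0 + g0) * u) (-(f0 + g0)) t := by
      simpa using (hasDerivAt_id t).const_mul (-(f0 + g0))
    have H := (h1.exp).const_mul ρ0in
    exact H.congr_deriv (by beta_reduce; ring)
  · intro t ht x hx hne
    have hxab' : x ∈ Set.Icc a' b' := ⟨by linarith [hx.1], by linarith [hx.2]⟩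
    have hxb' : x < b' := by linarith [hx.2]
    have hfx : 0 < f x := hfab x (hsub hxab')
    have hTa'neg : T a' < 0 := by
      have := hTmono ⟨le_rfl, by linarith⟩ h0ab' ha'0
      rwa [hT0] at this
    have hTxpos : 0 < T x := by
      have := hTmono h0ab' hxab' hx.1
      rwa [hT0] at this
    have hTxb' : T x < T b' := hTmono hxab' ⟨by linarith, le_rfl⟩ hxb'
    have hTcx : ContinuousAt T x := (hTderiv x hxab').continuousAt
    have hfd : HasDerivAt f (deriv f x) x := (hfC1.differentiable one_ne_zero x).hasDerivAt
    have hneT : t ≠ T x := hne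
    have hgap2 : ∀ y ∈ Set.Icc a' b', ∀ z ∈ Set.Icc a' b', |y - z| ≤ M / ε * |T y - T z| := by
      intro y hy z hz
      rcases le_total y z with h | h
      · have h1 := hgap y hy z hz h
        have h0 : 0 ≤ ε / M * (z - y) := mul_nonneg (by positivity) (by linarith)
        rw [abs_of_nonpos (by linarith : y - z ≤ 0), abs_of_nonpos (by linarith : T y - T z ≤ 0)]
        have h2 := mul_le_mul_of_nonneg_right h1 (le_of_lt (by positivity : (0:ℝ) < M / ε))
        have h3 : ε / M * (z - y) * (M / ε) = z - y := by field_simp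
        calc -(y - z) = ε / M * (z - y) * (M / ε) := by rw [h3]; ring
          _ ≤ (T z - T y) * (M / ε) := h2
          _ = M / ε * -(T y - T z) := by ring
      · have h1 := hgap z hz y hy h
        have h0 : 0 ≤ ε / M * (y - z) := mul_nonneg (by positivity) (by linarith)
        rw [abs_of_nonneg (by linarith : 0 ≤ y - z), abs_of_nonneg (by linarith : 0 ≤ T y - T z)]
        have h2 := mul_le_mul_of_nonneg_right h1 (le_of_lt (by positivity : (0:ℝ) < M / ε))
        have h3 : ε / M * (y - z) * (M / ε) = y - z := by field_simp
        calc y - z = ε / M * (y - z) * (M / ε) := by rw [h3]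
          _ ≤ (T y - T z) * (M / ε) := h2
          _ = M / ε * (T y - T z) := by ring
    rcases lt_or_gt_of_ne hneT with hlt | hgt
    · -- before the characteristic : t < T x
      set η := min ((T x - t) / 2) ((T b' - T x) / 2) with hηdef
      have hηpos : 0 < η := lt_min (by linarith) (by linarith)
      have hη1 : η ≤ (T x - t) / 2 := min_le_left _ _
      have hη2 : η ≤ (T b' - T x) / 2 := min_le_right _ _
      have hηa : t + η < T x := by linarith
      have hηb : T x + η < T b' := by linarith
      have hrelS : ∀ s ∈ Set.Ioo (t - η) (t + η),
          X 0 s x ∈ Set.Icc a' b' ∧ T (X 0 s x) = T x - s := by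
        intro s hs
        rcases le_or_gt 0 s with h0s | h0s
        · exact consF s x h0s hxab' hxb' (by linarith [hs.2])
        · exact consB s x h0s.le hxab' (by linarith [hx.1]) (by linarith [hs.1])
      have htmem : t ∈ Set.Ioo (t - η) (t + η) := ⟨by linarith, by linarith⟩
      have hIoo_nhds : Set.Ioo (t - η) (t + η) ∈ nhds t := Ioo_mem_nhds (by linarith) (by linarith)
      have hX0t := hrelS t htmem
      set z0 := X 0 t x with hz0def
      have hz0ab : z0 ∈ Set.Icc a' b' := hX0t.1
      have hfz0 : 0 < f z0 := hfab z0 (hsub hz0ab)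
      have hgs_cont : ContinuousAt (fun s => X 0 s x) t := by
        have hlips : LipschitzOnWith (M / ε).toNNReal (fun s => X 0 s x)
            (Set.Ioo (t - η) (t + η)) := by
          rw [lipschitzOnWith_iff_dist_le_mul]
          intro s hs s' hs'
          have h1 := hrelS s hs
          have h2 := hrelS s' hs'
          rw [Real.dist_eq, Real.dist_eq, Real.coe_toNNReal _ (by positivity)]
          have h3 := hgap2 _ h1.1 _ h2.1
          rw [h1.2, h2.2] at h3
          calc |X 0 s x - X 0 s' x| ≤ M / ε * |T x - s - (T x - s')| := h3
            _ = M / ε * |s - s'| := by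
                rw [show T x - s - (T x - s') = -(s - s') by ring, abs_neg]
        exact hlips.continuousOn.continuousAt hIoo_nhds
      have hψ : HasDerivAt (fun y => T x - T y) (-(ε / f z0)) z0 :=
        (hTderiv z0 hz0ab).const_sub (T x)
      have hψne : -(ε / f z0) ≠ 0 := neg_ne_zero.mpr (div_pos hε hfz0).ne'
      have hfg : ∀ᶠ s in nhds t, (fun y => T x - T y) ((fun s => X 0 s x) s) = s := by
        filter_upwards [hIoo_nhds] with s hs
        show T x - T (X 0 s x) = s
        rw [(hrelS s hs).2]
        ring
      have hgs_deriv : HasDerivAt (fun s => X 0 s x) (-(ε / f z0))⁻¹ t :=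
        HasDerivAt.of_local_left_inverse hgs_cont hψ hψne hfg
      have hP : ∀ z ∈ Set.Icc a' b', HasDerivAt (fun z => Real.exp (F z) * ρin z)
          (Real.exp (F z) * q z * ρin z + Real.exp (F z) * deriv ρin z) z := by
        intro z hz
        exact ((hFderiv z hz).exp).mul ((hρin.differentiable one_ne_zero z).hasDerivAt)
      have hcomp := (hP z0 hz0ab).comp t hgs_deriv
      have hDt0 := hcomp.const_mul (Real.exp (-F x))
      have hDt : HasDerivAt (fun s => ρ s x)
          (Real.exp (-F x) * ((Real.exp (F z0) * q z0 * ρin z0 + Real.exp (F z0) * deriv ρin z0)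
            * (-(ε / f z0))⁻¹)) t := by
        refine HasDerivAt.congr_of_eventuallyEq hDt0 ?_
        filter_upwards [hIoo_nhds] with s hs
        have hz := hrelS s hs
        rw [hρ s x, if_pos (le_of_lt (by linarith [hs.2] : s < T x))]
        rw [hqsub _ (hsub hz.1) _ (hsub hxab')]
        rw [show -(F x - F (X 0 s x)) = F (X 0 s x) + -F x by ring, Real.exp_add]
        simp only [Function.comp_apply]
        ring
      -- space derivative
      have hev1 : ∀ᶠ y in nhds x, y ∈ Set.Ioo (0:ℝ) 1 := isOpen_Ioo.eventually_mem hx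
      have hev2 : ∀ᶠ y in nhds x, t < T y := hTcx.eventually (eventually_gt_nhds hlt)
      have hev3 : ∀ᶠ y in nhds x, |T y - T x| < η := by
        have h1 : ∀ᶠ z in nhds (T x), |z - T x| < η := by
          filter_upwards [Metric.ball_mem_nhds (T x) hηpos] with z hz
          rwa [Metric.mem_ball, Real.dist_eq] at hz
        exact hTcx.eventually h1
      have hevX : ∀ᶠ y in nhds x, y ∈ Set.Icc a' b' ∧
          (X 0 t y ∈ Set.Icc a' b' ∧ T (X 0 t y) = T y - t) ∧
          X 0 t y = X 0 (t + T x - T y) x := by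
        filter_upwards [hev1, hev2, hev3] with y hy1 hy2 hy3
        have hyab : y ∈ Set.Icc a' b' := ⟨by linarith [hy1.1], by linarith [hy1.2]⟩
        have hcF := consF t y ht hyab (by linarith [hy1.2]) (by linarith [hy2])
        have harg : t + T x - T y ∈ Set.Ioo (t - η) (t + η) := by
          have habs := abs_lt.mp hy3
          constructor <;> [linarith [habs.2]; linarith [habs.1]]
        have hgs := hrelS _ harg
        refine ⟨hyab, hcF, ?_⟩
        apply hTmono.injOn hcF.1 hgs.1
        rw [hcF.2, hgs.2]
        ring
      have harg0 : t + T x - T x = t := by ring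
      have hinner : HasDerivAt (fun y => t + T x - T y) (-(ε / f x)) x :=
        (hTderiv x hxab').const_sub (t + T x)
      have hgs2 : HasDerivAt (fun s => X 0 s x) (-(ε / f z0))⁻¹ (t + T x - T x) := by
        rw [harg0]; exact hgs_deriv
      have hcomp2 := hgs2.comp x hinner
      have hPz : HasDerivAt (fun z => Real.exp (F z) * ρin z)
          (Real.exp (F z0) * q z0 * ρin z0 + Real.exp (F z0) * deriv ρin z0)
          (((fun s => X 0 s x) ∘ fun y => t + T x - T y) x) := by
        show HasDerivAt _ _ (X 0 (t + T x - T x) x)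
        rw [harg0]; exact hP z0 hz0ab
      have hcomp3 := hPz.comp x hcomp2
      have hexpF : HasDerivAt (fun y => Real.exp (-F y)) (Real.exp (-F x) * -(q x)) x :=
        ((hFderiv x hxab').neg).exp
      have hDx0 := hfd.mul (hexpF.mul hcomp3)
      have hDx : HasDerivAt (fun y => f y * ρ t y)
          (deriv f x * (Real.exp (-F x) *
              ((fun z => Real.exp (F z) * ρin z) ((fun s => X 0 s x) ((fun y => t + T x - T y) x))))
            + f x * (Real.exp (-F x) * -(q x) *
              ((fun z => Real.exp (F z) * ρin z) ((fun s => X 0 s x) ((fun y => t + T x - T y) x)))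
              + Real.exp (-F x) *
              ((Real.exp (F z0) * q z0 * ρin z0 + Real.exp (F z0) * deriv ρin z0)
                * ((-(ε / f z0))⁻¹ * -(ε / f x))))) x := by
        refine HasDerivAt.congr_of_eventuallyEq hDx0 ?_
        filter_upwards [hevX, hev2] with y hy hy2
        simp only [Pi.mul_apply, Function.comp_apply]
        rw [hρ t y, if_pos hy2.le, ← hy.2.2]
        rw [hqsub _ (hsub hy.2.1.1) _ (hsub hy.1)]
        rw [show -(F y - F (X 0 t y)) = F (X 0 t y) + -F y by ring, Real.exp_add]
        ring
      refine ⟨_, _, hDt, hDx, ?_⟩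
      have hρtx : ρ t x = Real.exp (-F x) * (Real.exp (F z0) * ρin z0) := by
        rw [hρ t x, if_pos hlt.le, ← hz0def, hqsub _ (hsub hz0ab) _ (hsub hxab')]
        rw [show -(F x - F z0) = F z0 + -F x by ring, Real.exp_add]
        ring
      rw [hρtx]
      simp only [Function.comp_apply, harg0, ← hz0def]
      have hinv : (-(ε / f z0))⁻¹ = -(f z0 / ε) := by
        rw [inv_neg, inv_div]
      have hqx : q x = (g x + deriv f x) / f x := by rw [hqdef]
      rw [hinv, hqx]
      field_simp [hfx.ne', hfz0.ne', hε.ne']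
      ring
    · -- after the characteristic : T x < t
      have hevs : ∀ᶠ s in nhds t, ¬ s ≤ T x := by
        filter_upwards [eventually_gt_nhds hgt] with s hs
        exact not_le.mpr hs
      have hinn : HasDerivAt (fun s : ℝ => -(f0 + g0) * (s - T x)) (-(f0 + g0)) t := by
        simpa using ((hasDerivAt_id t).sub_const (T x)).const_mul (-(f0 + g0))
      have hDt0 := ((hinn.exp).const_mul (f0 / f 0 * ρ0in)).mul_const (Real.exp (-F x))
      have hDt : HasDerivAt (fun s => ρ s x)
          (f0 / f 0 * ρ0in * (Real.exp (-(f0 + g0) * (t - T x)) * -(f0 + g0))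
            * Real.exp (-F x)) t := by
        refine HasDerivAt.congr_of_eventuallyEq hDt0 ?_
        filter_upwards [hevs] with s hs
        rw [hρ s x, if_neg hs]
      have hev2' : ∀ᶠ y in nhds x, ¬ t ≤ T y := by
        have := hTcx.eventually (eventually_lt_nhds hgt)
        filter_upwards [this] with y hy
        exact not_le.mpr hy
      have hinn2 : HasDerivAt (fun y => -(f0 + g0) * (t - T y)) (-(f0 + g0) * -(ε / f x)) x :=
        ((hTderiv x hxab').const_sub t).const_mul (-(f0 + g0))
      have hDxa := ((hinn2.exp).const_mul (f0 / f 0 * ρ0in)).mul (((hFderiv x hxab').neg).exp)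
      have hDx0 := hfd.mul hDxa
      have hDx : HasDerivAt (fun y => f y * ρ t y)
          (deriv f x * (f0 / f 0 * ρ0in * Real.exp (-(f0 + g0) * (t - T x)) * Real.exp (-F x))
            + f x * (f0 / f 0 * ρ0in * (Real.exp (-(f0 + g0) * (t - T x))
                * (-(f0 + g0) * -(ε / f x))) * Real.exp (-F x)
              + f0 / f 0 * ρ0in * Real.exp (-(f0 + g0) * (t - T x))
                * (Real.exp (-F x) * -(q x)))) x := by
        refine HasDerivAt.congr_of_eventuallyEq hDx0 ?_
        filter_upwards [hev2'] with y hy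
        rw [hρ t y, if_neg hy]
        rfl
      refine ⟨_, _, hDt, hDx, ?_⟩
      have hρtx : ρ t x = f0 / f 0 * ρ0in * Real.exp (-(f0 + g0) * (t - T x))
          * Real.exp (-F x) := by
        rw [hρ t x, if_neg (not_le.mpr hgt)]
      rw [hρtx]
      have hqx : q x = (g x + deriv f x) / f x := by rw [hqdef]
      rw [hqx]
      generalize f0 / f 0 * ρ0in = C
      field_simp [hfx.ne']
      ring
  · intro t htpos
    have hTc0 : ContinuousAt T 0 := (hTderiv 0 h0ab').continuousAt
    have hFc0 : ContinuousAt F 0 := (hFderiv 0 h0ab').continuousAt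
    have hev : ∀ᶠ y in nhds (0:ℝ), T y < t := hTc0.eventually (hT0 ▸ eventually_lt_nhds htpos)
    have heq : (fun y => f y * (f0 / f 0 * ρ0in * Real.exp (-(f0 + g0) * (t - T y))
        * Real.exp (-F y))) =ᶠ[nhdsWithin (0:ℝ) (Set.Ioi 0)] (fun y => f y * ρ t y) := by
      filter_upwards [hev.filter_mono nhdsWithin_le_nhds] with y hy
      rw [hρ t y, if_neg (not_le.mpr hy)]
    have c1 : ContinuousAt (fun y => -(f0 + g0) * (t - T y)) 0 :=
      (continuousAt_const.sub hTc0).const_mul _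
    have c2 : ContinuousAt (fun y => Real.exp (-(f0 + g0) * (t - T y))) 0 :=
      Real.continuous_exp.continuousAt.comp c1
    have c3 : ContinuousAt (fun y => Real.exp (-F y)) 0 :=
      Real.continuous_exp.continuousAt.comp hFc0.neg
    have hlim : Tendsto (fun y => f y * (f0 / f 0 * ρ0in * Real.exp (-(f0 + g0) * (t - T y))
        * Real.exp (-F y))) (nhds (0:ℝ))
        (nhds (f 0 * (f0 / f 0 * ρ0in * Real.exp (-(f0 + g0) * (t - T 0)) * Real.exp (-F 0)))) :=
      (hcf.continuousAt.mul (((continuousAt_const.mul c2).mul c3))).tendsto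
    have hval : f 0 * (f0 / f 0 * ρ0in * Real.exp (-(f0 + g0) * (t - T 0)) * Real.exp (-F 0))
        = f0 * ρ0 t := by
      rw [hT0, hF0, hρ0 t]
      have hf0ne : f 0 ≠ 0 := hfne 0 h0ab
      rw [sub_zero, neg_zero, Real.exp_zero]
      field_simp
    rw [← hval]
    exact (hlim.mono_left nhdsWithin_le_nhds).congr' heq
end
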